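/- arXiv:1702.07496 — 5 statements merged into one kernel-verified Lean document; each statement's English description precedes it below -/
import Mathlib

section
/- Let x = (x_k)_{k∈ℤ} be a complex sequence with S := ∑_{k∈ℤ} |x_k x_{k+1}| < ∞. Then for every m ≥ 1 the m-th inner sum in the definition of 𝔉 converges absolutely with ∑_{k∈ℤ^m, k_{j+1} ≥ k_j + 2 for all j} ∏_{j=1}^m |x_{k_j} x_{k_j+1}| ≤ S^m/m!; consequently the series defining 𝔉(x) converges absolutely and |𝔉(x)| ≤ exp(S). -/
set_option maxHeartbeats 1000000


open Filter Topology
open scoped Classical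

noncomputable section

namespace Jacobi

/-- Admissible index tuples `k : Fin (m+1) → ℤ` with gaps `≥ 2` (an `(m+1)`-tuple,
corresponding to the `m`-th summand, `m ≥ 1`, in the paper). -/
def Tup (m : ℕ) : Type :=
  {k : Fin (m + 1) → ℤ // ∀ j : Fin m, k j.castSucc + 2 ≤ k j.succ}

/-- The function `𝔉` of Stampach--Stovicek. -/
def FF (x : ℤ → ℂ) : ℂ :=
  1 + ∑' m : ℕ, (-1 : ℂ) ^ (m + 1) * ∑' k : Tup m, ∏ j, x (k.1 j) * x (k.1 j + 1)

/-- `𝔉` applied to the restriction of `x` to `s` (extension by zeros). -/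
def FFon (s : Set ℤ) (x : ℤ → ℂ) : ℂ := FF (s.indicator x)

/-- `ℂ₀^λ`. -/
def C0 (lam : ℤ → ℂ) : Set ℂ := (closure (Set.range lam))ᶜ

/-- `der λ`: the set of (finite) accumulation points of the sequence `λ`. -/
def der (lam : ℤ → ℂ) : Set ℂ := {z | MapClusterPt z Filter.cofinite lam}

/-- The basic convergence condition (at one point of `ℂ₀^λ`). -/
def ConvCond (lam w : ℤ → ℂ) : Prop :=
  ∃ z₀ ∈ C0 lam, Summable fun n : ℤ => ‖w n ^ 2 / ((lam n - z₀) * (lam (n + 1) - z₀))‖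

/-- The characteristic function `F_𝒥`. -/
def charF (lam γ : ℤ → ℂ) (z : ℂ) : ℂ := FF fun n => γ n ^ 2 / (z - lam n)

/-- `r(z)`. -/
def rz (lam : ℤ → ℂ) (z : ℂ) : ℕ := Set.ncard {n : ℤ | lam n = z}

/-- `r₊(z)`. -/
def rp (lam : ℤ → ℂ) (z : ℂ) : ℕ := Set.ncard {n : ℤ | 0 < n ∧ lam n = z}

/-- `r₋(z)`. -/
def rm (lam : ℤ → ℂ) (z : ℂ) : ℕ := Set.ncard {n : ℤ | n ≤ 0 ∧ lam n = z}

/-- `𝒫_n(z)`. -/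
def Pz (lam w : ℤ → ℂ) (z : ℂ) (n : ℤ) : ℂ :=
  if 0 ≤ n then ∏ k ∈ Finset.Icc (1 : ℤ) n, w (k - 1) / (z - lam k)
  else ∏ k ∈ Finset.Icc (n + 1) (0 : ℤ), (z - lam k) / w (k - 1)

/-- `𝔉((γ_k²/(λ_k − z))_{k=n}^{∞})`. -/
def Fplus (lam γ : ℤ → ℂ) (z : ℂ) (n : ℤ) : ℂ :=
  FFon {k | n ≤ k} fun k => γ k ^ 2 / (lam k - z)

/-- `𝔉((γ_k²/(λ_k − z))_{k=−∞}^{n})`. -/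
def Fminus (lam γ : ℤ → ℂ) (z : ℂ) (n : ℤ) : ℂ :=
  FFon {k | k ≤ n} fun k => γ k ^ 2 / (lam k - z)

/-- `f_n(z)` for `z ∈ ℂ₀^λ`. -/
def fSol₀ (lam w γ : ℤ → ℂ) (z : ℂ) (n : ℤ) : ℂ :=
  Pz lam w z n * Fplus lam γ z (n + 1)

/-- `g_n(z)` for `z ∈ ℂ₀^λ`. -/
def gSol₀ (lam w γ : ℤ → ℂ) (z : ℂ) (n : ℤ) : ℂ :=
  (w (n - 1) * Pz lam w z (n - 1))⁻¹ * Fminus lam γ z (n - 1)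

/-- `f_n(z)` extended to `ℂ ∖ der λ` by the limit formula. -/
def fSol (lam w γ : ℤ → ℂ) (z : ℂ) (n : ℤ) : ℂ :=
  if z ∈ C0 lam then fSol₀ lam w γ z n
  else limUnder (𝓝[C0 lam] z) fun u => (u - z) ^ rp lam z * fSol₀ lam w γ u n

/-- `g_n(z)` extended to `ℂ ∖ der λ` by the limit formula. -/
def gSol (lam w γ : ℤ → ℂ) (z : ℂ) (n : ℤ) : ℂ :=
  if z ∈ C0 lam then gSol₀ lam w γ z n
  else limUnder (𝓝[C0 lam] z) fun u => (u - z) ^ rm lam z * gSol₀ lam w γ u n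

/-- The extended zero set `𝔷(𝒥)` of the characteristic function. -/
def Zset (lam w γ : ℤ → ℂ) : Set ℂ :=
  {z | z ∉ der lam ∧
    Tendsto (fun u => (u - z) ^ rz lam z * charF lam γ u) (𝓝[C0 lam] z) (𝓝 0)}

/-- The Hilbert space `ℓ²(ℤ)`. -/
abbrev ℓ2 : Type := lp (fun _ : ℤ => ℂ) 2

/-- The formal Jacobi matrix acting on sequences. -/
def Jop (lam w : ℤ → ℂ) (u : ℤ → ℂ) : ℤ → ℂ := fun n =>
  w (n - 1) * u (n - 1) + lam n * u n + w n * u (n + 1)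

lemma Jop_add (lam w : ℤ → ℂ) (u v : ℤ → ℂ) :
    Jop lam w (u + v) = Jop lam w u + Jop lam w v := by
  funext n; simp [Jop]; ring

lemma Jop_smul (lam w : ℤ → ℂ) (c : ℂ) (u : ℤ → ℂ) :
    Jop lam w (c • u) = c • Jop lam w u := by
  funext n; simp [Jop]; ring

/-- The domain of the maximal operator. -/
def JmaxDom (lam w : ℤ → ℂ) : Submodule ℂ ℓ2 where
  carrier := {x | Memℓp (Jop lam w ⇑x) 2}
  add_mem' := by
    intro x y hx hy
    show Memℓp (Jop lam w ⇑(x + y)) 2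
    rw [lp.coeFn_add, Jop_add]
    exact hx.add hy
  zero_mem' := by
    show Memℓp (Jop lam w ⇑(0 : ℓ2)) 2
    have h0 : Jop lam w ⇑(0 : ℓ2) = 0 := by
      funext n; simp [Jop, lp.coeFn_zero]
    rw [h0]
    exact zero_memℓp
  smul_mem' := by
    intro c x hx
    show Memℓp (Jop lam w ⇑(c • x)) 2
    rw [lp.coeFn_smul, Jop_smul]
    exact hx.const_smul c

/-- The maximal operator `J_max` as a partially defined linear operator on `ℓ²(ℤ)`. -/
def Jmax (lam w : ℤ → ℂ) : ℓ2 →ₗ.[ℂ] ℓ2 where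
  domain := JmaxDom lam w
  toFun :=
    { toFun := fun x => (⟨Jop lam w ⇑(x : ℓ2), x.2⟩ : ℓ2)
      map_add' := by
        intro x y
        apply lp.ext
        rw [lp.coeFn_add]
        show Jop lam w ⇑((x : ℓ2) + (y : ℓ2)) = Jop lam w ⇑(x : ℓ2) + Jop lam w ⇑(y : ℓ2)
        rw [lp.coeFn_add, Jop_add]
      map_smul' := by
        intro c x
        apply lp.ext
        rw [lp.coeFn_smul]
        show Jop lam w ⇑(c • (x : ℓ2)) = c • Jop lam w ⇑(x : ℓ2)
        rw [lp.coeFn_smul, Jop_smul] }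

/-- The standard basis vector `e n` in `ℓ²(ℤ)`. -/
def eVec (n : ℤ) : ℓ2 := lp.single 2 n (1 : ℂ)

/-- The span of the standard basis vectors. -/
def stdSpan : Submodule ℂ ℓ2 := Submodule.span ℂ (Set.range eVec)

/-- The minimal operator `J_min`: the closure of the restriction of `𝒥` to the span of the
standard basis. -/
def Jmin (lam w : ℤ → ℂ) : ℓ2 →ₗ.[ℂ] ℓ2 :=
  ((Jmax lam w).domRestrict stdSpan).closure

/-- `z` is an eigenvalue of the partially defined operator `T`. -/
def IsEV (T : ℓ2 →ₗ.[ℂ] ℓ2) (z : ℂ) : Prop :=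
  ∃ x : T.domain, (x : ℓ2) ≠ 0 ∧ T x = z • (x : ℓ2)

/-- `z` belongs to the resolvent set of `T`: `T - z` is a bijection of `Dom T` onto `ℓ²(ℤ)`
with bounded (continuous linear) inverse. -/
def InRes (T : ℓ2 →ₗ.[ℂ] ℓ2) (z : ℂ) : Prop :=
  ∃ R : ℓ2 →L[ℂ] ℓ2,
    (∀ x : T.domain, R (T x - z • (x : ℓ2)) = x) ∧
    ∀ y : ℓ2, ∃ hy : R y ∈ T.domain, T ⟨R y, hy⟩ - z • (R y) = y

/-- The spectrum of a partially defined operator. -/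
def Spec (T : ℓ2 →ₗ.[ℂ] ℓ2) : Set ℂ := {z | ¬ InRes T z}

/-- `Ker (T - z)^n`. -/
def iterKer (T : ℓ2 →ₗ.[ℂ] ℓ2) (z : ℂ) : ℕ → Set ℓ2
  | 0 => {0}
  | n + 1 => {x | ∃ hx : x ∈ T.domain, ((T ⟨x, hx⟩ : ℓ2) - z • x) ∈ iterKer T z n}

/-- The set of generalized eigenvectors of `T` at `z`. -/
def genEig (T : ℓ2 →ₗ.[ℂ] ℓ2) (z : ℂ) : Set ℓ2 :=
  {x | ∃ n : ℕ, x ∈ iterKer T z n}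

/-- `Φ_p^+`. -/
def PhiP (lam : ℤ → ℂ) (p : ℕ) (z : ℂ) : ℂ :=
  ∏' n : ℕ, ((1 - lam ((n : ℤ) + 1) / z) *
    Complex.exp (∑ j ∈ Finset.Icc 1 (p - 1), (lam ((n : ℤ) + 1) / z) ^ j / (j : ℂ)))

/-- `Φ_p^-`. -/
def PhiM (lam : ℤ → ℂ) (p : ℕ) (z : ℂ) : ℂ :=
  ∏' n : ℕ, ((1 - lam (-(n : ℤ)) / z) *
    Complex.exp (∑ j ∈ Finset.Icc 1 (p - 1), (lam (-(n : ℤ)) / z) ^ j / (j : ℂ)))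

/-- `Ψ_p^+`. -/
def PsiP (lam : ℤ → ℂ) (p : ℕ) (z : ℂ) : ℂ :=
  ∏' n : ℕ, ((1 - z / lam ((n : ℤ) + 1)) *
    Complex.exp (∑ j ∈ Finset.Icc 1 (p - 1), (z / lam ((n : ℤ) + 1)) ^ j / (j : ℂ)))

/-- `Ψ_p^-`. -/
def PsiM (lam : ℤ → ℂ) (p : ℕ) (z : ℂ) : ℂ :=
  ∏' n : ℕ, ((1 - z / lam (-(n : ℤ))) *
    Complex.exp (∑ j ∈ Finset.Icc 1 (p - 1), (z / lam (-(n : ℤ))) ^ j / (j : ℂ)))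

end Jacobi


private lemma hasSum_pi_prod (y : ℤ → ℝ) (hy : ∀ k, 0 ≤ y k) (hs : Summable y) :
    ∀ n : ℕ, HasSum (fun k : Fin n → ℤ => ∏ j, y (k j)) ((∑' k, y k) ^ n) := by
  intro n
  induction n with
  | zero =>
      have : HasSum (fun k : Fin 0 → ℤ => ∏ j, y (k j))
          (∏ j : Fin 0, y ((default : Fin 0 → ℤ) j)) :=
        hasSum_single default (fun b hb => absurd (Subsingleton.elim b default) hb)
      simpa using this
  | succ n ih =>
      have hsum : Summable (fun p : ℤ × (Fin n → ℤ) => y p.1 * ∏ j, y (p.2 j)) :=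
        Summable.mul_of_nonneg (f := y) (g := fun k : Fin n → ℤ => ∏ j, y (k j))
          hs ih.summable (fun _ => hy _) (fun k => Finset.prod_nonneg fun j _ => hy _)
      have h1 : HasSum (fun p : ℤ × (Fin n → ℤ) => y p.1 * ∏ j, y (p.2 j))
          ((∑' k, y k) * (∑' k, y k) ^ n) := by
        rw [HasSum.mul_eq (f := y) (g := fun k : Fin n → ℤ => ∏ j, y (k j))
          hs.hasSum ih hsum.hasSum]
        exact hsum.hasSum
      have hcomp : (fun k : Fin (n + 1) → ℤ => ∏ j, y (k j))
            ∘ (Fin.consEquiv (fun _ : Fin (n + 1) => ℤ))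
          = fun p : ℤ × (Fin n → ℤ) => y p.1 * ∏ j, y (p.2 j) := by
        funext p
        simp [Fin.consEquiv, Fin.prod_univ_succ]
      have := (Equiv.hasSum_iff (f := fun k : Fin (n + 1) → ℤ => ∏ j, y (k j))
          (a := (∑' k, y k) ^ (n + 1)) (Fin.consEquiv (fun _ : Fin (n + 1) => ℤ))).mp ?_
      · exact this
      · show HasSum ((fun k : Fin (n + 1) → ℤ => ∏ j, y (k j))
            ∘ (Fin.consEquiv (fun _ : Fin (n + 1) => ℤ))) _
        rw [hcomp, pow_succ, mul_comm ((∑' k, y k) ^ n)]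
        exact h1

private lemma strictMono_perm_eq {n : ℕ} {f g : Fin n → ℤ} (hf : StrictMono f)
    (hg : StrictMono g) (σ : Equiv.Perm (Fin n)) (h : f = g ∘ σ) : f = g ∧ σ = 1 := by
  have hσ : StrictMono (σ : Fin n → Fin n) := by
    intro i j hij
    have : f i < f j := hf hij
    rw [h] at this
    exact hg.lt_iff_lt.mp this
  have : StrictMono.orderIsoOfSurjective (σ : Fin n → Fin n) hσ σ.surjective
      = OrderIso.refl (Fin n) := Subsingleton.elim _ _
  have hσ1 : σ = 1 := by
    ext i
    have := congrArg (fun o => (o : Fin n ≃o Fin n) i) this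
    exact congrArg Fin.val this
  constructor
  · rw [h, hσ1]; funext i; simp
  · exact hσ1

/-- absolute convergence of the series defining `𝔉` and the bound `|𝔉(x)| ≤ e^S`. -/
theorem statement0 (x : ℤ → ℂ) (hx : Summable fun k : ℤ => ‖x k * x (k + 1)‖) :
    (∀ m : ℕ,
      Summable (fun k : Jacobi.Tup m => ‖∏ j, x (k.1 j) * x (k.1 j + 1)‖) ∧
      ∑' k : Jacobi.Tup m, ‖∏ j, x (k.1 j) * x (k.1 j + 1)‖ ≤
        (∑' k : ℤ, ‖x k * x (k + 1)‖) ^ (m + 1) / (Nat.factorial (m + 1) : ℝ)) ∧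
    Summable (fun m : ℕ =>
      ‖(-1 : ℂ) ^ (m + 1) * ∑' k : Jacobi.Tup m, ∏ j, x (k.1 j) * x (k.1 j + 1)‖) ∧
    ‖Jacobi.FF x‖ ≤ Real.exp (∑' k : ℤ, ‖x k * x (k + 1)‖) := by
  set y : ℤ → ℝ := fun k => ‖x k * x (k + 1)‖ with hy_def
  have hy0 : ∀ k, 0 ≤ y k := fun k => norm_nonneg _
  have hpi := hasSum_pi_prod y hy0 hx
  set S : ℝ := ∑' k, y k with hS_def
  have hS0 : 0 ≤ S := tsum_nonneg hy0
  have hmono : ∀ (m : ℕ) (k : Jacobi.Tup m), StrictMono k.1 := by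
    intro m k
    rw [Fin.strictMono_iff_lt_succ]
    intro i
    have := k.2 i
    omega
  have hnorm : ∀ (m : ℕ) (k : Jacobi.Tup m),
      ‖∏ j, x (k.1 j) * x (k.1 j + 1)‖ = ∏ j, y (k.1 j) := by
    intro m k
    exact norm_prod _ _
  have hval_inj : ∀ m : ℕ, Function.Injective (fun k : Jacobi.Tup m => k.1) :=
    fun m a b hab => Subtype.ext hab
  have hsummable : ∀ m : ℕ, Summable (fun k : Jacobi.Tup m => ∏ j, y (k.1 j)) := by
    intro m
    exact (hpi (m + 1)).summable.comp_injective (hval_inj m)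
  have hbound : ∀ m : ℕ, ∑' k : Jacobi.Tup m, ∏ j, y (k.1 j)
      ≤ S ^ (m + 1) / (Nat.factorial (m + 1) : ℝ) := by
    intro m
    set n := m + 1 with hn
    set φ : Jacobi.Tup m × Equiv.Perm (Fin n) → (Fin n → ℤ) :=
      fun p => p.1.1 ∘ p.2 with hφ
    have hφinj : Function.Injective φ := by
      rintro ⟨k, σ⟩ ⟨k', σ'⟩ h
      have h2 : k.1 = k'.1 ∘ (σ.symm.trans σ' : Equiv.Perm (Fin n)) := by
        funext i
        have := congrFun h (σ.symm i)
        simpa [φ] using this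
      obtain ⟨hfg, hτ⟩ := strictMono_perm_eq (hmono m k) (hmono m k') _ h2
      have hk : k = k' := Subtype.ext hfg
      have hσ : σ' = σ := by
        ext i
        have h3 := Equiv.ext_iff.mp hτ (σ i)
        simp only [Equiv.trans_apply, Equiv.symm_apply_apply, Equiv.Perm.coe_one, id_eq] at h3
        exact congrArg Fin.val h3
      simp [hk, hσ]
    have hFφ : (fun k : Fin n → ℤ => ∏ j, y (k j)) ∘ φ
        = fun p : Jacobi.Tup m × Equiv.Perm (Fin n) => ∏ j, y (p.1.1 j) := by
      funext p
      exact Equiv.prod_comp p.2 (fun j => y (p.1.1 j))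
    have hsc : Summable ((fun k : Fin n → ℤ => ∏ j, y (k j)) ∘ φ) :=
      (hpi n).summable.comp_injective hφinj
    have hle : ∑' p, ((fun k : Fin n → ℤ => ∏ j, y (k j)) ∘ φ) p ≤ S ^ n := by
      rw [← (hpi n).tsum_eq]
      exact hsc.tsum_le_tsum_of_inj φ hφinj
        (fun c _ => Finset.prod_nonneg fun j _ => hy0 _)
        (fun p => le_rfl) (hpi n).summable
    rw [hFφ] at hsc hle
    have hinner : ∀ k : Jacobi.Tup m,
        ∑' _ : Equiv.Perm (Fin n), (∏ j, y (k.1 j))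
          = (Nat.factorial n : ℝ) * ∏ j, y (k.1 j) := by
      intro k
      rw [tsum_fintype]
      simp [Finset.sum_const, Finset.card_univ, Fintype.card_perm, Fintype.card_fin,
        nsmul_eq_mul]
    have hprod : ∑' p : Jacobi.Tup m × Equiv.Perm (Fin n), ∏ j, y (p.1.1 j)
        = (Nat.factorial n : ℝ) * ∑' k : Jacobi.Tup m, ∏ j, y (k.1 j) := by
      rw [Summable.tsum_prod' hsc (fun k => Summable.of_finite)]
      simp_rw [hinner]
      exact tsum_mul_left
    rw [hprod] at hle
    rw [le_div_iff₀ (by positivity : (0 : ℝ) < (Nat.factorial n : ℝ))]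
    linarith
  have part1 : ∀ m : ℕ,
      Summable (fun k : Jacobi.Tup m => ‖∏ j, x (k.1 j) * x (k.1 j + 1)‖) ∧
      ∑' k : Jacobi.Tup m, ‖∏ j, x (k.1 j) * x (k.1 j + 1)‖ ≤
        S ^ (m + 1) / (Nat.factorial (m + 1) : ℝ) := by
    intro m
    have heq : (fun k : Jacobi.Tup m => ‖∏ j, x (k.1 j) * x (k.1 j + 1)‖)
        = fun k : Jacobi.Tup m => ∏ j, y (k.1 j) := funext (hnorm m)
    rw [heq]
    exact ⟨hsummable m, hbound m⟩
  have hA : ∀ m : ℕ,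
      ‖(-1 : ℂ) ^ (m + 1) * ∑' k : Jacobi.Tup m, ∏ j, x (k.1 j) * x (k.1 j + 1)‖
        ≤ S ^ (m + 1) / (Nat.factorial (m + 1) : ℝ) := by
    intro m
    rw [norm_mul, norm_pow, norm_neg, norm_one, one_pow, one_mul]
    exact le_trans (norm_tsum_le_tsum_norm (part1 m).1) (part1 m).2
  have hb_sum : Summable (fun m : ℕ => S ^ (m + 1) / (Nat.factorial (m + 1) : ℝ)) :=
    (Real.summable_pow_div_factorial S).comp_injective Nat.succ_injective
  have partB : Summable (fun m : ℕ =>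
      ‖(-1 : ℂ) ^ (m + 1) * ∑' k : Jacobi.Tup m, ∏ j, x (k.1 j) * x (k.1 j + 1)‖) :=
    Summable.of_nonneg_of_le (fun m => norm_nonneg _) hA hb_sum
  refine ⟨part1, partB, ?_⟩
  have hexp : Real.exp S = 1 + ∑' m : ℕ, S ^ (m + 1) / (Nat.factorial (m + 1) : ℝ) := by
    have : Real.exp S = ∑' n : ℕ, S ^ n / (Nat.factorial n : ℝ) := by
      rw [Real.exp_eq_exp_ℝ, NormedSpace.exp_eq_tsum_div]
    rw [this, Summable.tsum_eq_zero_add (Real.summable_pow_div_factorial S)]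
    norm_num
  rw [hexp, Jacobi.FF]
  refine le_trans (norm_add_le _ _) ?_
  rw [norm_one]
  exact add_le_add_right
    (le_trans (norm_tsum_le_tsum_norm partB) (partB.tsum_le_tsum hA hb_sum)) 1


end
end

section
/- Under the convergence condition, the characteristic function F_𝒥 is analytic (complex differentiable) at every point of ℂ₀^λ, and for every z ∈ ℂ₀^λ one has F_𝒥(z) = lim_{n→∞} 𝔉((γ_k²/(λ_k − z))_{k=−n}^{n}), the convergence being locally uniform on ℂ₀^λ. -/
open Filter Topology
open scoped Classical

noncomputable section

namespace Jacobi

open ENNReal NNReal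

section Aux

lemma Tup.strictMono {m : ℕ} (k : Tup m) : StrictMono k.1 :=
  Fin.strictMono_iff_lt_succ.2 fun j => by have := k.2 j; omega

/-- The core `G` function: `𝔉` expressed through the products `p k = x k * x (k+1)`. -/
def GG (p : ℤ → ℂ) : ℂ :=
  1 + ∑' m : ℕ, (-1 : ℂ) ^ (m + 1) * ∑' k : Tup m, ∏ j, p (k.1 j)

lemma FF_eq_GG (x : ℤ → ℂ) : FF x = GG (fun k => x k * x (k + 1)) := rfl

private lemma tsum_pi_fin (c : ℤ → ℝ≥0∞) : ∀ n : ℕ,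
    (∑' f : Fin n → ℤ, ∏ j, c (f j)) = (∑' i, c i) ^ n
  | 0 => by
    have h1 : ∀ f : Fin 0 → ℤ, (∏ j, c (f j)) = 1 := fun f => by simp
    rw [tsum_congr h1, pow_zero]
    exact tsum_eq_single default fun f hf => (hf (Subsingleton.elim f default)).elim
  | n + 1 => by
    rw [← (Fin.consEquiv (fun _ : Fin (n + 1) => ℤ)).tsum_eq]
    have h1 : ∀ p : ℤ × (Fin n → ℤ),
        (∏ j, c ((Fin.consEquiv (fun _ : Fin (n + 1) => ℤ)) p j))
          = c p.1 * ∏ j : Fin n, c (p.2 j) := by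
      intro p
      rw [Fin.prod_univ_succ]
      simp [Fin.consEquiv]
    rw [tsum_congr h1, ENNReal.tsum_prod']
    simp_rw [ENNReal.tsum_mul_left]
    rw [ENNReal.tsum_mul_right, tsum_pi_fin c n]
    ring

private lemma tsum_cond (c e : ℤ → ℝ≥0∞) (n : ℕ) :
    (∑' f : Fin (n + 1) → ℤ, e (f 0) * ∏ j : Fin n, c (f j.succ))
      = (∑' i, e i) * (∑' i, c i) ^ n := by
  rw [← (Fin.consEquiv (fun _ : Fin (n + 1) => ℤ)).tsum_eq]
  have h1 : ∀ p : ℤ × (Fin n → ℤ),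
      e ((Fin.consEquiv (fun _ : Fin (n + 1) => ℤ)) p 0)
          * (∏ j : Fin n, c ((Fin.consEquiv (fun _ : Fin (n + 1) => ℤ)) p j.succ))
        = e p.1 * ∏ j : Fin n, c (p.2 j) := by
    intro p; simp [Fin.consEquiv]
  rw [tsum_congr h1, ENNReal.tsum_prod']
  simp_rw [ENNReal.tsum_mul_left]
  rw [ENNReal.tsum_mul_right, tsum_pi_fin c n]

/-- Indicator with a fixed (classical) decidability instance. -/
def ind (P : Prop) (x : ℝ≥0∞) : ℝ≥0∞ := if P then x else 0

lemma ind_pos {P : Prop} (h : P) (x : ℝ≥0∞) : ind P x = x := if_pos h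

lemma ind_neg {P : Prop} (h : ¬P) (x : ℝ≥0∞) : ind P x = 0 := if_neg h

lemma ind_le_self (P : Prop) (x : ℝ≥0∞) : ind P x ≤ x := by
  by_cases h : P
  · rw [ind_pos h]
  · rw [ind_neg h]; exact zero_le

lemma ind_mul (P : Prop) (x y : ℝ≥0∞) : ind P (x * y) = ind P x * y := by
  by_cases h : P
  · rw [ind_pos h, ind_pos h]
  · rw [ind_neg h, ind_neg h, zero_mul]

private lemma tsum_coord (c : ℤ → ℝ≥0∞) (bad : ℤ → Prop) (n : ℕ) (j0 : Fin (n + 1)) :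
    (∑' f : Fin (n + 1) → ℤ, ind (bad (f j0)) (∏ i, c (f i)))
      = (∑' i, ind (bad i) (c i)) * (∑' i, c i) ^ n := by
  have key0 : (∑' f : Fin (n + 1) → ℤ, ind (bad (f 0)) (∏ i, c (f i)))
      = (∑' i, ind (bad i) (c i)) * (∑' i, c i) ^ n := by
    have h1 : ∀ f : Fin (n + 1) → ℤ,
        ind (bad (f 0)) (∏ i, c (f i))
          = ind (bad (f 0)) (c (f 0)) * ∏ j : Fin n, c (f j.succ) := by
      intro f
      rw [Fin.prod_univ_succ, ind_mul]
    rw [tsum_congr h1]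
    exact tsum_cond c (fun i => ind (bad i) (c i)) n
  set σ : Equiv.Perm (Fin (n + 1)) := Equiv.swap 0 j0 with hσ
  have hE : ∀ g : (Fin (n + 1) → ℤ) → ℝ≥0∞,
      (∑' f : Fin (n + 1) → ℤ, g f) = ∑' f : Fin (n + 1) → ℤ, g (f ∘ σ) := by
    intro g
    exact ((Equiv.arrowCongr σ.symm (Equiv.refl ℤ)).tsum_eq g).symm.trans
      (tsum_congr fun f => rfl)
  rw [hE, ← key0]
  refine tsum_congr fun f => ?_
  have h0 : (f ∘ σ) j0 = f 0 := by simp [hσ, Equiv.swap_apply_right]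
  have h2 : (∏ i, c ((f ∘ σ) i)) = ∏ i, c (f i) := Equiv.prod_comp σ fun i => c (f i)
  rw [h0, h2]

private lemma key_bound (c : ℤ → ℝ≥0∞) (bad : ℤ → Prop) (m : ℕ) :
    (∑' k : Tup m, ind (∃ j, bad (k.1 j)) (∏ j, c (k.1 j)))
      ≤ (∑' i, ind (bad i) (c i)) * (∑' i, c i) ^ m / (m.factorial : ℝ≥0∞) := by
  set G : (Fin (m + 1) → ℤ) → ℝ≥0∞ :=
    fun f => ind (∃ j, bad (f j)) (∏ j, c (f j)) with hG
  have hGperm : ∀ (k : Fin (m + 1) → ℤ) (σ : Equiv.Perm (Fin (m + 1))), G (k ∘ σ) = G k := by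
    intro k σ
    have h1 : (∃ j, bad ((k ∘ σ) j)) ↔ ∃ j, bad (k j) :=
      ⟨fun ⟨j, hj⟩ => ⟨σ j, hj⟩, fun ⟨j, hj⟩ => ⟨σ.symm j, by simpa using hj⟩⟩
    have h2 : (∏ j, c ((k ∘ σ) j)) = ∏ j, c (k j) := Equiv.prod_comp σ fun j => c (k j)
    simp only [hG]
    rw [h2, propext h1]
  have hinj : Function.Injective
      (fun p : Tup m × Equiv.Perm (Fin (m + 1)) => (p.1.1 ∘ p.2 : Fin (m + 1) → ℤ)) := by
    rintro ⟨k, σ⟩ ⟨k', σ'⟩ h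
    simp only at h
    have hr : Set.range k.1 = Set.range k'.1 := by
      rw [← σ.surjective.range_comp k.1, ← σ'.surjective.range_comp k'.1, h]
    have hwf : WellFoundedLT (Fin (m + 1)) := inferInstance
    have hk : k.1 = k'.1 :=
      (@StrictMono.range_inj (Fin (m + 1)) ℤ _ _ hwf k.1 k'.1 k.strictMono k'.strictMono).1 hr
    have hσ : σ = σ' := by
      refine Equiv.ext fun i => ?_
      have h3 : k.1 (σ i) = k'.1 (σ' i) := congrFun h i
      rw [← hk] at h3
      exact k.strictMono.injective h3
    exact Prod.ext_iff.2 ⟨Subtype.ext hk, hσ⟩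
  have stepA : (((m + 1).factorial : ℝ≥0∞)) * ∑' k : Tup m, G k.1
      ≤ ∑' f : Fin (m + 1) → ℤ, G f := by
    calc ((m + 1).factorial : ℝ≥0∞) * ∑' k : Tup m, G k.1
        = ∑' k : Tup m, ∑' _σ : Equiv.Perm (Fin (m + 1)), G k.1 := by
          rw [← ENNReal.tsum_mul_left]
          refine tsum_congr fun k => ?_
          rw [tsum_fintype, Finset.sum_const, Finset.card_univ, Fintype.card_perm,
            Fintype.card_fin, nsmul_eq_mul]
      _ = ∑' p : Tup m × Equiv.Perm (Fin (m + 1)), G (p.1.1 ∘ p.2) := by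
          rw [ENNReal.tsum_prod']
          exact tsum_congr fun k => tsum_congr fun σ => (hGperm k.1 σ).symm
      _ ≤ ∑' f : Fin (m + 1) → ℤ, G f := ENNReal.tsum_comp_le_tsum_of_injective hinj G
  have stepB : (∑' f : Fin (m + 1) → ℤ, G f)
      ≤ ∑ j : Fin (m + 1), ∑' f : Fin (m + 1) → ℤ, ind (bad (f j)) (∏ i, c (f i)) := by
    rw [← Summable.tsum_finsetSum fun j _ => ENNReal.summable]
    refine ENNReal.tsum_le_tsum fun f => ?_
    by_cases h : ∃ j, bad (f j)
    · obtain ⟨j0, hj0⟩ := h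
      have h4 : G f = ind (bad (f j0)) (∏ i, c (f i)) := by
        simp only [hG]
        rw [ind_pos ⟨j0, hj0⟩, ind_pos hj0]
      rw [h4]
      exact Finset.single_le_sum (f := fun j => ind (bad (f j)) (∏ i, c (f i)))
        (fun _ _ => zero_le) (Finset.mem_univ j0)
    · simp only [hG]
      rw [ind_neg h]
      exact zero_le
  have stepC : (∑ j : Fin (m + 1), ∑' f : Fin (m + 1) → ℤ, ind (bad (f j)) (∏ i, c (f i)))
      = ((m + 1 : ℕ) : ℝ≥0∞) * ((∑' i, ind (bad i) (c i)) * (∑' i, c i) ^ m) := by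
    rw [Finset.sum_congr rfl fun j _ => tsum_coord c bad m j, Finset.sum_const,
      Finset.card_univ, Fintype.card_fin, nsmul_eq_mul]
  have hfac0 : ((m.factorial : ℝ≥0∞)) ≠ 0 := Nat.cast_ne_zero.2 m.factorial_ne_zero
  have hiff := ENNReal.le_div_iff_mul_le
    (a := ∑' k : Tup m, ind (∃ j, bad (k.1 j)) (∏ j, c (k.1 j)))
    (c := (∑' i, ind (bad i) (c i)) * (∑' i, c i) ^ m)
    (b := (m.factorial : ℝ≥0∞)) (Or.inl hfac0) (Or.inl (natCast_ne_top _))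
  refine hiff.2 ?_
  have hmain : ((m + 1).factorial : ℝ≥0∞) * (∑' k : Tup m, G k.1)
      ≤ ((m + 1 : ℕ) : ℝ≥0∞) * ((∑' i, ind (bad i) (c i)) * (∑' i, c i) ^ m) :=
    stepA.trans (stepB.trans stepC.le)
  have hfac : ((m + 1).factorial : ℝ≥0∞)
      = ((m + 1 : ℕ) : ℝ≥0∞) * (m.factorial : ℝ≥0∞) := by
    rw [Nat.factorial_succ]; push_cast; ring
  rw [hfac, mul_assoc] at hmain
  have := (ENNReal.mul_le_mul_iff_right (a := ((m + 1 : ℕ) : ℝ≥0∞))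
    (by positivity) (natCast_ne_top _)).1 hmain
  rw [mul_comm]
  exact this

/-- Main norm-summability helper. -/
private lemma tsum_nn_le {ι : Type*} {f : ι → ℂ} {r : ι → ℝ≥0∞}
    (hf : ∀ i, (‖f i‖₊ : ℝ≥0∞) ≤ r i) (hr : (∑' i, r i) ≠ ⊤) :
    Summable f ∧ ((‖∑' i, f i‖₊ : ℝ≥0∞) ≤ ∑' i, r i) := by
  have h1 : ∀ i, ‖f i‖₊ ≤ (r i).toNNReal := by
    intro i
    have hri : r i ≠ ⊤ := ENNReal.ne_top_of_tsum_ne_top hr i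
    rw [← ENNReal.coe_le_coe, ENNReal.coe_toNNReal hri]
    exact hf i
  have hrs : Summable fun i => (r i).toNNReal := by
    rw [← ENNReal.tsum_coe_ne_top_iff_summable]
    refine ne_top_of_le_ne_top hr (ENNReal.tsum_le_tsum fun i => ENNReal.coe_toNNReal_le_self)
  have hfn : Summable fun i => ‖f i‖₊ := NNReal.summable_of_le h1 hrs
  have hsf : Summable f := Summable.of_nnnorm hfn
  refine ⟨hsf, ?_⟩
  calc ((‖∑' i, f i‖₊ : ℝ≥0) : ℝ≥0∞) ≤ ((∑' i, ‖f i‖₊ : ℝ≥0) : ℝ≥0∞) :=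
        ENNReal.coe_le_coe.2 (nnnorm_tsum_le hfn)
    _ = ∑' i, ((‖f i‖₊ : ℝ≥0) : ℝ≥0∞) := ENNReal.coe_tsum hfn
    _ ≤ ∑' i, r i := ENNReal.tsum_le_tsum hf

/-- `BB p = ∑ ‖p k‖` in `ℝ≥0∞`. -/
def BB (p : ℤ → ℂ) : ℝ≥0∞ := ∑' k, (‖p k‖₊ : ℝ≥0∞)

private lemma coe_prod_nnnorm {m : ℕ} (p : ℤ → ℂ) (k : Tup m) :
    ((‖∏ j, p (k.1 j)‖₊ : ℝ≥0) : ℝ≥0∞) = ∏ j, ((‖p (k.1 j)‖₊ : ℝ≥0) : ℝ≥0∞) := by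
  rw [nnnorm_prod, ENNReal.coe_finset_prod]

private lemma tup_tsum_le (p : ℤ → ℂ) (m : ℕ) :
    (∑' k : Tup m, ∏ j, ((‖p (k.1 j)‖₊ : ℝ≥0) : ℝ≥0∞))
      ≤ BB p * BB p ^ m / (m.factorial : ℝ≥0∞) := by
  have h := key_bound (fun i => ((‖p i‖₊ : ℝ≥0) : ℝ≥0∞)) (fun _ => True) m
  have h1 : (∑' k : Tup m, ∏ j, ((‖p (k.1 j)‖₊ : ℝ≥0) : ℝ≥0∞))
      = ∑' k : Tup m, ind (∃ _j : Fin (m + 1), True)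
          (∏ j, ((‖p (k.1 j)‖₊ : ℝ≥0) : ℝ≥0∞)) :=
    tsum_congr fun k => (ind_pos ⟨0, trivial⟩ _).symm
  have h2 : (∑' i : ℤ, ind True ((‖p i‖₊ : ℝ≥0) : ℝ≥0∞)) = BB p :=
    tsum_congr fun i => ind_pos trivial _
  rw [h2] at h
  rw [h1]
  exact h

private lemma rhs_ne_top {T B : ℝ≥0∞} (hT : T ≠ ⊤) (hB : B ≠ ⊤) (m : ℕ) :
    T * B ^ m / (m.factorial : ℝ≥0∞) ≠ ⊤ :=
  (ENNReal.div_lt_top (ENNReal.mul_ne_top hT (ENNReal.pow_ne_top hB))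
    (Nat.cast_ne_zero.2 m.factorial_ne_zero)).ne

private lemma inner_facts (p : ℤ → ℂ) (hB : BB p ≠ ⊤) (m : ℕ) :
    Summable (fun k : Tup m => ∏ j, p (k.1 j)) ∧
    ((‖∑' k : Tup m, ∏ j, p (k.1 j)‖₊ : ℝ≥0∞)
      ≤ BB p * BB p ^ m / (m.factorial : ℝ≥0∞)) := by
  have h := tsum_nn_le (f := fun k : Tup m => ∏ j, p (k.1 j))
    (r := fun k => ∏ j, ((‖p (k.1 j)‖₊ : ℝ≥0) : ℝ≥0∞))
    (fun k => (coe_prod_nnnorm p k).le)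
    (ne_top_of_le_ne_top (rhs_ne_top hB hB m) (tup_tsum_le p m))
  exact ⟨h.1, h.2.trans (tup_tsum_le p m)⟩

private lemma EE_ne_top {B : ℝ≥0∞} (hB : B ≠ ⊤) :
    (∑' m : ℕ, B ^ m / (m.factorial : ℝ≥0∞)) ≠ ⊤ := by
  lift B to ℝ≥0 using hB
  have hsum : Summable fun m : ℕ => B ^ m / (m.factorial : ℝ≥0) := by
    rw [← NNReal.summable_coe]
    simp only [NNReal.coe_div, NNReal.coe_pow, NNReal.coe_natCast]
    exact Real.summable_pow_div_factorial (B : ℝ)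
  have h1 : ∀ m : ℕ, (B : ℝ≥0∞) ^ m / (m.factorial : ℝ≥0∞)
      = ((B ^ m / (m.factorial : ℝ≥0) : ℝ≥0) : ℝ≥0∞) := by
    intro m
    rw [ENNReal.coe_div (Nat.cast_ne_zero.2 m.factorial_ne_zero)]
    push_cast
    ring
  rw [tsum_congr h1, ← ENNReal.coe_tsum hsum]
  exact coe_ne_top

private lemma outer_summable (p : ℤ → ℂ) (hB : BB p ≠ ⊤) :
    Summable (fun m : ℕ => (-1 : ℂ) ^ (m + 1) * ∑' k : Tup m, ∏ j, p (k.1 j)) := by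
  refine (tsum_nn_le (r := fun m => BB p * BB p ^ m / (m.factorial : ℝ≥0∞)) ?_ ?_).1
  · intro m
    have hnn : ‖(-1 : ℂ) ^ (m + 1) * ∑' k : Tup m, ∏ j, p (k.1 j)‖₊
        = ‖∑' k : Tup m, ∏ j, p (k.1 j)‖₊ := by
      simp [nnnorm_mul]
    rw [hnn]
    exact (inner_facts p hB m).2
  · have h1 : ∀ m : ℕ, BB p * BB p ^ m / (m.factorial : ℝ≥0∞)
        = BB p * (BB p ^ m / (m.factorial : ℝ≥0∞)) := fun m => by
      rw [mul_div_assoc]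
    rw [tsum_congr h1, ENNReal.tsum_mul_left]
    exact ENNReal.mul_ne_top hB (EE_ne_top hB)

/-- Key quantitative estimate: `𝔉` minus its truncation. -/
private lemma GG_diff (p q : ℤ → ℂ) (hq : ∀ k, q k = p k ∨ q k = 0) (hB : BB p ≠ ⊤) :
    ((‖GG p - GG q‖₊ : ℝ≥0)  : ℝ≥0∞) ≤
      (∑' i, ind (q i ≠ p i) ((‖p i‖₊ : ℝ≥0) : ℝ≥0∞))
        * ∑' m : ℕ, BB p ^ m / (m.factorial : ℝ≥0∞) := by
  set T : ℝ≥0∞ := ∑' i, ind (q i ≠ p i) ((‖p i‖₊ : ℝ≥0) : ℝ≥0∞) with hT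
  have hqp : ∀ i, (‖q i‖₊ : ℝ≥0∞) ≤ (‖p i‖₊ : ℝ≥0∞) := by
    intro i
    rcases hq i with h | h <;> simp [h]
  have hBq : BB q ≠ ⊤ := ne_top_of_le_ne_top hB (ENNReal.tsum_le_tsum hqp)
  have hTle : T ≤ BB p := ENNReal.tsum_le_tsum fun i => ind_le_self _ _
  have hTne : T ≠ ⊤ := ne_top_of_le_ne_top hB hTle
  -- per-`m` difference estimate
  have hdm : ∀ m : ℕ,
      ((‖(∑' k : Tup m, ∏ j, p (k.1 j)) - ∑' k : Tup m, ∏ j, q (k.1 j)‖₊ : ℝ≥0) : ℝ≥0∞)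
        ≤ T * BB p ^ m / (m.factorial : ℝ≥0∞) := by
    intro m
    rw [← Summable.tsum_sub (inner_facts p hB m).1 (inner_facts q hBq m).1]
    have hkey := key_bound (fun i => ((‖p i‖₊ : ℝ≥0) : ℝ≥0∞)) (fun i => q i ≠ p i) m
    have h := tsum_nn_le
      (f := fun k : Tup m => (∏ j, p (k.1 j)) - ∏ j, q (k.1 j))
      (r := fun k : Tup m =>
        ind (∃ j, q (k.1 j) ≠ p (k.1 j)) (∏ j, ((‖p (k.1 j)‖₊ : ℝ≥0) : ℝ≥0∞)))
      ?_ ?_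
    · exact h.2.trans hkey
    · intro k
      show ((‖(∏ j, p (k.1 j)) - ∏ j, q (k.1 j)‖₊ : ℝ≥0) : ℝ≥0∞)
        ≤ ind (∃ j, q (k.1 j) ≠ p (k.1 j)) (∏ j, ((‖p (k.1 j)‖₊ : ℝ≥0) : ℝ≥0∞))
      by_cases hex : ∃ j, q (k.1 j) ≠ p (k.1 j)
      · rw [ind_pos hex]
        obtain ⟨j0, hj0⟩ := hex
        have hq0 : q (k.1 j0) = 0 := (hq (k.1 j0)).resolve_left hj0
        have hprodq : (∏ j, q (k.1 j)) = 0 :=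
          Finset.prod_eq_zero (Finset.mem_univ j0) hq0
        rw [hprodq, sub_zero]
        exact (coe_prod_nnnorm p k).le
      · rw [ind_neg hex]
        push_neg at hex
        have heq : (∏ j, p (k.1 j)) = ∏ j, q (k.1 j) :=
          Finset.prod_congr rfl fun j _ => (hex j).symm
        simp [heq]
    · exact ne_top_of_le_ne_top (rhs_ne_top hTne hB m) hkey
  -- outer estimate
  have hgg : GG p - GG q = ∑' m : ℕ, (-1 : ℂ) ^ (m + 1) *
      ((∑' k : Tup m, ∏ j, p (k.1 j)) - ∑' k : Tup m, ∏ j, q (k.1 j)) := by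
    have h1 : GG p - GG q
        = (∑' m : ℕ, (-1 : ℂ) ^ (m + 1) * ∑' k : Tup m, ∏ j, p (k.1 j))
          - ∑' m : ℕ, (-1 : ℂ) ^ (m + 1) * ∑' k : Tup m, ∏ j, q (k.1 j) := by
      rw [GG, GG]; ring
    rw [h1, ← Summable.tsum_sub (outer_summable p hB) (outer_summable q hBq)]
    exact tsum_congr fun m => by ring
  have hrT : (∑' m : ℕ, T * BB p ^ m / (m.factorial : ℝ≥0∞)) ≠ ⊤ := by
    have h1 : ∀ m : ℕ, T * BB p ^ m / (m.factorial : ℝ≥0∞)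
        = T * (BB p ^ m / (m.factorial : ℝ≥0∞)) := fun m => by rw [mul_div_assoc]
    rw [tsum_congr h1, ENNReal.tsum_mul_left]
    exact ENNReal.mul_ne_top hTne (EE_ne_top hB)
  have hfinal := tsum_nn_le
    (f := fun m : ℕ => (-1 : ℂ) ^ (m + 1) *
      ((∑' k : Tup m, ∏ j, p (k.1 j)) - ∑' k : Tup m, ∏ j, q (k.1 j)))
    (r := fun m => T * BB p ^ m / (m.factorial : ℝ≥0∞))
    (fun m => by
      have hnn : ‖(-1 : ℂ) ^ (m + 1) *
          ((∑' k : Tup m, ∏ j, p (k.1 j)) - ∑' k : Tup m, ∏ j, q (k.1 j))‖₊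
          = ‖(∑' k : Tup m, ∏ j, p (k.1 j)) - ∑' k : Tup m, ∏ j, q (k.1 j)‖₊ := by
        simp [nnnorm_mul]
      rw [hnn]
      exact hdm m) hrT
  rw [hgg]
  refine hfinal.2.trans ?_
  have h1 : ∀ m : ℕ, T * BB p ^ m / (m.factorial : ℝ≥0∞)
      = T * (BB p ^ m / (m.factorial : ℝ≥0∞)) := fun m => by rw [mul_div_assoc]
  rw [tsum_congr h1, ENNReal.tsum_mul_left]

/-- Admissible tuples with entries in a finite set. -/
private def tupFinset (m : ℕ) (S : Finset ℤ) : Finset (Tup m) :=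
  Finset.subtype (p := fun k : Fin (m + 1) → ℤ => ∀ j : Fin m, k j.castSucc + 2 ≤ k j.succ)
    (Fintype.piFinset fun _ : Fin (m + 1) => S)

private lemma mem_tupFinset {m : ℕ} {S : Finset ℤ} (k : Tup m) :
    k ∈ tupFinset m S ↔ ∀ j, k.1 j ∈ S := by
  unfold tupFinset
  exact Finset.mem_subtype.trans Fintype.mem_piFinset

/-- `GG` of a finitely supported sequence is a finite sum. -/
private lemma GG_finsupp (q : ℤ → ℂ) (S : Finset ℤ) (hq : ∀ k, k ∉ S → q k = 0) :
    GG q = 1 + ∑ m ∈ Finset.range S.card,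
      (-1 : ℂ) ^ (m + 1) * ∑ k ∈ tupFinset m S, ∏ j, q (k.1 j) := by
  classical
  rw [GG]
  congr 1
  rw [tsum_eq_sum (s := Finset.range S.card) ?_]
  · refine Finset.sum_congr rfl fun m _ => ?_
    congr 1
    rw [tsum_eq_sum (s := tupFinset m S) ?_]
    intro k hk
    have hex : ∃ j, k.1 j ∉ S := by
      by_contra hcon
      push_neg at hcon
      exact hk ((mem_tupFinset k).2 hcon)
    obtain ⟨j, hj⟩ := hex
    exact Finset.prod_eq_zero (Finset.mem_univ j) (hq _ hj)
  · intro m hm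
    have hm' : S.card ≤ m := by simpa using hm
    have hz : ∀ k : Tup m, (∏ j, q (k.1 j)) = 0 := by
      intro k
      have hex : ∃ j, k.1 j ∉ S := by
        by_contra hcon
        push_neg at hcon
        have hcard := Finset.card_le_card_of_injOn
          (s := (Finset.univ : Finset (Fin (m + 1)))) (t := S) k.1 (fun j _ => hcon j)
          k.strictMono.injective.injOn
        rw [Finset.card_univ, Fintype.card_fin] at hcard
        omega
      obtain ⟨j, hj⟩ := hex
      exact Finset.prod_eq_zero (Finset.mem_univ j) (hq _ hj)
    rw [tsum_congr hz, tsum_zero, mul_zero]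

end Aux

end Jacobi

open scoped ENNReal NNReal in
lemma ofReal_norm_eq_coe_nnnorm {E : Type*} [SeminormedAddCommGroup E] (a : E) :
    ENNReal.ofReal ‖a‖ = ((‖a‖₊ : ℝ≥0) : ℝ≥0∞) := ENNReal.ofReal_eq_coe_nnreal _

open scoped ENNReal NNReal in
/-- analyticity of the characteristic function on `ℂ₀^λ` and its locally
uniform approximation by finite sections. -/
theorem statement1 (lam w γ : ℤ → ℂ) (hw : ∀ n, w n ≠ 0)
    (hγ : ∀ n, γ n * γ (n + 1) = w n) (hconv : Jacobi.ConvCond lam w) :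
    (∀ z ∈ Jacobi.C0 lam, AnalyticAt ℂ (Jacobi.charF lam γ) z) ∧
    TendstoLocallyUniformlyOn
      (fun (n : ℕ) (z : ℂ) =>
        Jacobi.FFon (Set.Icc (-(n : ℤ)) (n : ℤ)) fun k => γ k ^ 2 / (lam k - z))
      (Jacobi.charF lam γ) atTop (Jacobi.C0 lam) ∧
    ∀ z ∈ Jacobi.C0 lam,
      Tendsto
        (fun n : ℕ => Jacobi.FFon (Set.Icc (-(n : ℤ)) (n : ℤ)) fun k => γ k ^ 2 / (lam k - z))
        atTop (𝓝 (Jacobi.charF lam γ z)) := by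
  classical
  obtain ⟨z₀, hz₀, hsum₀⟩ := hconv
  have hopen : IsOpen (Jacobi.C0 lam) := isClosed_closure.isOpen_compl
  have hlamS : ∀ k : ℤ, lam k ∈ closure (Set.range lam) := fun k => subset_closure ⟨k, rfl⟩
  have hne : ∀ {z : ℂ}, z ∈ Jacobi.C0 lam → ∀ k : ℤ, z - lam k ≠ 0 := by
    intro z hz k
    refine sub_ne_zero.2 fun h => ?_
    exact hz (h ▸ hlamS k)
  set p : ℂ → ℤ → ℂ := fun z k =>
    (γ k ^ 2 / (z - lam k)) * (γ (k + 1) ^ 2 / (z - lam (k + 1))) with hp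
  have hchar : ∀ z : ℂ, Jacobi.charF lam γ z = Jacobi.GG (p z) := fun z => rfl
  set q : ℕ → ℂ → ℤ → ℂ := fun n z k =>
    if k ∈ Finset.Icc (-(n : ℤ)) ((n : ℤ) - 1) then p z k else 0 with hqdef
  have hpw : ∀ z k, p z k = w k ^ 2 / ((z - lam k) * (z - lam (k + 1))) := by
    intro z k
    rw [hp]
    simp only
    rw [div_mul_div_comm, ← mul_pow, hγ]
  have hsign : ∀ (z : ℂ) (k : ℤ),
      (γ k ^ 2 / (lam k - z)) * (γ (k + 1) ^ 2 / (lam (k + 1) - z)) = p z k := by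
    intro z k
    rw [hp]
    simp only
    rw [show lam k - z = -(z - lam k) by ring,
      show lam (k + 1) - z = -(z - lam (k + 1)) by ring, div_neg, div_neg, neg_mul_neg]
  have hmem : ∀ (n : ℕ) (k : ℤ), k ∈ Finset.Icc (-(n : ℤ)) ((n : ℤ) - 1)
      ↔ (k ∈ Set.Icc (-(n : ℤ)) (n : ℤ) ∧ (k + 1) ∈ Set.Icc (-(n : ℤ)) (n : ℤ)) := by
    intro n k
    simp only [Finset.mem_Icc, Set.mem_Icc]
    omega
  have hFn : ∀ (n : ℕ) (z : ℂ),
      Jacobi.FFon (Set.Icc (-(n : ℤ)) (n : ℤ)) (fun k => γ k ^ 2 / (lam k - z))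
        = Jacobi.GG (q n z) := by
    intro n z
    unfold Jacobi.FFon
    rw [Jacobi.FF_eq_GG]
    congr 1
    funext k
    by_cases h : k ∈ Finset.Icc (-(n : ℤ)) ((n : ℤ) - 1)
    · have h2 := (hmem n k).1 h
      rw [Set.indicator_of_mem h2.1, Set.indicator_of_mem h2.2, hqdef]
      simp only [if_pos h]
      exact hsign z k
    · rw [hqdef]
      simp only [if_neg h]
      rcases not_and_or.1 (fun hc => h ((hmem n k).2 hc)) with h1 | h1
      · rw [Set.indicator_of_notMem h1, zero_mul]
      · rw [Set.indicator_of_notMem h1, mul_zero]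
  have hqor : ∀ (n : ℕ) (z : ℂ) (k : ℤ), q n z k = p z k ∨ q n z k = 0 := by
    intro n z k
    rw [hqdef]
    by_cases h : k ∈ Finset.Icc (-(n : ℤ)) ((n : ℤ) - 1)
    · left; simp only [if_pos h]
    · right; simp only [if_neg h]
  -- differentiability of the finite sections
  have hdiffFn : ∀ n : ℕ, DifferentiableOn ℂ (fun z => Jacobi.GG (q n z)) (Jacobi.C0 lam) := by
    intro n
    have hrw : (fun z => Jacobi.GG (q n z)) = fun z =>
        1 + ∑ m ∈ Finset.range (Finset.Icc (-(n : ℤ)) ((n : ℤ) - 1)).card,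
          (-1 : ℂ) ^ (m + 1) * ∑ k ∈ Jacobi.tupFinset m (Finset.Icc (-(n : ℤ)) ((n : ℤ) - 1)),
            ∏ j, q n z (k.1 j) := by
      funext z
      exact Jacobi.GG_finsupp (q n z) _ (fun k hk => by rw [hqdef]; simp only [if_neg hk])
    rw [hrw]
    refine (differentiableOn_const _).add ?_
    refine DifferentiableOn.fun_sum fun m _ => ?_
    refine (differentiableOn_const _).mul ?_
    refine DifferentiableOn.fun_sum fun k _ => ?_
    refine DifferentiableOn.fun_finsetProd fun j _ => ?_
    by_cases h : k.1 j ∈ Finset.Icc (-(n : ℤ)) ((n : ℤ) - 1)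
    · simp only [hqdef, if_pos h, hp]
      refine DifferentiableOn.mul ?_ ?_
      · exact (differentiableOn_const _).div
          (differentiableOn_id.sub (differentiableOn_const _)) (fun z hz => hne hz _)
      · exact (differentiableOn_const _).div
          (differentiableOn_id.sub (differentiableOn_const _)) (fun z hz => hne hz _)
    · simp only [hqdef, if_neg h]
      exact differentiableOn_const 0
  -- summability at the base point
  have hpz₀eq : ∀ k : ℤ, p z₀ k = w k ^ 2 / ((lam k - z₀) * (lam (k + 1) - z₀)) := by
    intro k
    rw [hpw, show (z₀ - lam k) * (z₀ - lam (k + 1))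
      = (lam k - z₀) * (lam (k + 1) - z₀) by ring]
  have hsum0' : Summable fun k => ‖p z₀ k‖ := by
    simp only [hpz₀eq]
    exact hsum₀
  have hB₀ : Jacobi.BB (p z₀) ≠ ⊤ := by
    rw [Jacobi.BB]
    refine ENNReal.tsum_coe_ne_top_iff_summable.2 ?_
    rw [← NNReal.summable_coe]
    simpa only [coe_nnnorm] using hsum0'
  -- the locally uniform convergence
  have hTLU : TendstoLocallyUniformlyOn
      (fun (n : ℕ) (z : ℂ) =>
        Jacobi.FFon (Set.Icc (-(n : ℤ)) (n : ℤ)) fun k => γ k ^ 2 / (lam k - z))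
      (Jacobi.charF lam γ) atTop (Jacobi.C0 lam) := by
    rw [tendstoLocallyUniformlyOn_iff_forall_isCompact hopen]
    intro K hKsub hKc
    rw [Metric.tendstoUniformlyOn_iff]
    intro ε hε
    rcases K.eq_empty_or_nonempty with rfl | hKne
    · exact Filter.Eventually.of_forall fun n x hx => absurd hx (Set.notMem_empty x)
    have hSne : (closure (Set.range lam)).Nonempty := ⟨lam 0, hlamS 0⟩
    obtain ⟨zK, hzK, hzKmin⟩ := hKc.exists_isMinOn hKne
      ((Metric.continuous_infDist_pt (closure (Set.range lam))).continuousOn)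
    set δ : ℝ := Metric.infDist zK (closure (Set.range lam)) with hδdef
    have hδpos : 0 < δ := (isClosed_closure.notMem_iff_infDist_pos hSne).1 (hKsub hzK)
    have hδle : ∀ z ∈ K, ∀ i : ℤ, δ ≤ ‖z - lam i‖ := by
      intro z hz i
      calc δ ≤ Metric.infDist z (closure (Set.range lam)) := hzKmin hz
        _ ≤ dist z (lam i) := Metric.infDist_le_dist_of_mem (hlamS i)
        _ = ‖z - lam i‖ := dist_eq_norm z (lam i)
    obtain ⟨M, hM⟩ := hKc.isBounded.subset_closedBall z₀
    have hMle : ∀ z ∈ K, ‖z - z₀‖ ≤ M := fun z hz => by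
      have h := hM hz
      rwa [Metric.mem_closedBall, dist_eq_norm] at h
    obtain ⟨zz, hzz⟩ := hKne
    have hM0 : 0 ≤ M := le_trans (norm_nonneg _) (hMle zz hzz)
    set C : ℝ := (1 + M / δ) ^ 2 with hC
    have hC0 : 0 ≤ C := sq_nonneg _
    have hcomp : ∀ z ∈ K, ∀ i : ℤ, ‖p z i‖ ≤ C * ‖p z₀ i‖ := by
      intro z hz i
      have hd1 : δ ≤ ‖z - lam i‖ := hδle z hz i
      have hd2 : δ ≤ ‖z - lam (i + 1)‖ := hδle z hz (i + 1)
      have htri : ∀ u : ℂ, ‖z₀ - u‖ ≤ (1 + M / δ) * ‖z - u‖ ∨ True := fun _ => Or.inr trivial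
      have he : ∀ u : ℂ, δ ≤ ‖z - u‖ → ‖z₀ - u‖ ≤ (1 + M / δ) * ‖z - u‖ := by
        intro u hd
        have h1 : ‖z₀ - u‖ ≤ ‖z₀ - z‖ + ‖z - u‖ := by
          calc ‖z₀ - u‖ = ‖(z₀ - z) + (z - u)‖ := by ring_nf
            _ ≤ ‖z₀ - z‖ + ‖z - u‖ := norm_add_le _ _
        have h2 : ‖z₀ - z‖ ≤ M := by rw [norm_sub_rev]; exact hMle z hz
        have h3 : M ≤ (M / δ) * ‖z - u‖ := by
          have h4 : (M / δ) * δ ≤ (M / δ) * ‖z - u‖ :=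
            mul_le_mul_of_nonneg_left hd (div_nonneg hM0 hδpos.le)
          rw [div_mul_cancel₀ M hδpos.ne'] at h4
          exact h4
        calc ‖z₀ - u‖ ≤ ‖z₀ - z‖ + ‖z - u‖ := h1
          _ ≤ M + ‖z - u‖ := by linarith
          _ ≤ (M / δ) * ‖z - u‖ + ‖z - u‖ := by linarith
          _ = (1 + M / δ) * ‖z - u‖ := by ring
      have he1 := he (lam i) hd1
      have he2 := he (lam (i + 1)) hd2
      have hnz : ‖p z i‖ = ‖w i ^ 2‖ / (‖z - lam i‖ * ‖z - lam (i + 1)‖) := by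
        rw [hpw, norm_div, norm_mul]
      have hnz₀ : ‖p z₀ i‖ = ‖w i ^ 2‖ / (‖z₀ - lam i‖ * ‖z₀ - lam (i + 1)‖) := by
        rw [hpw, norm_div, norm_mul]
      rw [hnz, hnz₀]
      have hNpos : (0 : ℝ) ≤ ‖w i ^ 2‖ := norm_nonneg _
      have hdpos1 : 0 < ‖z - lam i‖ := lt_of_lt_of_le hδpos hd1
      have hdpos2 : 0 < ‖z - lam (i + 1)‖ := lt_of_lt_of_le hδpos hd2
      have hepos1 : 0 < ‖z₀ - lam i‖ := norm_pos_iff.2 (hne hz₀ i)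
      have hepos2 : 0 < ‖z₀ - lam (i + 1)‖ := norm_pos_iff.2 (hne hz₀ (i + 1))
      have h12 : ‖z₀ - lam i‖ * ‖z₀ - lam (i + 1)‖
          ≤ C * (‖z - lam i‖ * ‖z - lam (i + 1)‖) := by
        have hmm : ‖z₀ - lam i‖ * ‖z₀ - lam (i + 1)‖
            ≤ ((1 + M / δ) * ‖z - lam i‖) * ((1 + M / δ) * ‖z - lam (i + 1)‖) := by
          have hpos : (0 : ℝ) ≤ (1 + M / δ) * ‖z - lam i‖ := by positivity
          exact mul_le_mul he1 he2 hepos2.le hpos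
        calc ‖z₀ - lam i‖ * ‖z₀ - lam (i + 1)‖
            ≤ ((1 + M / δ) * ‖z - lam i‖) * ((1 + M / δ) * ‖z - lam (i + 1)‖) := hmm
          _ = C * (‖z - lam i‖ * ‖z - lam (i + 1)‖) := by rw [hC]; ring
      rw [← mul_div_assoc, div_le_div_iff₀ (by positivity) (by positivity)]
      calc ‖w i ^ 2‖ * (‖z₀ - lam i‖ * ‖z₀ - lam (i + 1)‖)
          ≤ ‖w i ^ 2‖ * (C * (‖z - lam i‖ * ‖z - lam (i + 1)‖)) :=
            mul_le_mul_of_nonneg_left h12 hNpos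
        _ = C * ‖w i ^ 2‖ * (‖z - lam i‖ * ‖z - lam (i + 1)‖) := by ring
    set CE : ℝ≥0∞ := ENNReal.ofReal C with hCE
    have hCEne : CE ≠ ⊤ := ENNReal.ofReal_ne_top
    have hcompE : ∀ z ∈ K, ∀ i : ℤ,
        ((‖p z i‖₊ : ℝ≥0) : ℝ≥0∞) ≤ CE * ((‖p z₀ i‖₊ : ℝ≥0) : ℝ≥0∞) := by
      intro z hz i
      rw [← ofReal_norm_eq_coe_nnnorm, ← ofReal_norm_eq_coe_nnnorm, hCE,
        ← ENNReal.ofReal_mul hC0]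
      exact ENNReal.ofReal_le_ofReal (hcomp z hz i)
    have hBz : ∀ z ∈ K, Jacobi.BB (p z) ≤ CE * Jacobi.BB (p z₀) := by
      intro z hz
      rw [Jacobi.BB, Jacobi.BB, ← ENNReal.tsum_mul_left]
      exact ENNReal.tsum_le_tsum (hcompE z hz)
    have hBzt : ∀ z ∈ K, Jacobi.BB (p z) ≠ ⊤ := fun z hz =>
      ne_top_of_le_ne_top (ENNReal.mul_ne_top hCEne hB₀) (hBz z hz)
    have hBKne : CE * Jacobi.BB (p z₀) ≠ ⊤ := ENNReal.mul_ne_top hCEne hB₀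
    set EK : ℝ≥0∞ := ∑' m : ℕ, (CE * Jacobi.BB (p z₀)) ^ m / (m.factorial : ℝ≥0∞) with hEK
    have hEKne : EK ≠ ⊤ := Jacobi.EE_ne_top hBKne
    have hEz : ∀ z ∈ K,
        (∑' m : ℕ, Jacobi.BB (p z) ^ m / (m.factorial : ℝ≥0∞)) ≤ EK := by
      intro z hz
      refine ENNReal.tsum_le_tsum fun m => ?_
      exact ENNReal.div_le_div_right (pow_le_pow_left' (hBz z hz) m) _
    set nb0 : ℤ → ℝ≥0∞ := fun i => ((‖p z₀ i‖₊ : ℝ≥0) : ℝ≥0∞) with hnb0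
    set tail : ℕ → ℝ≥0∞ := fun n => ∑' i : ℤ,
      Jacobi.ind (i ∉ Finset.Icc (-(n : ℤ)) ((n : ℤ) - 1)) (nb0 i) with htaildef
    have htail0 : Tendsto tail atTop (𝓝 0) := by
      have h1 := ENNReal.tendsto_tsum_compl_atTop_zero (f := nb0) hB₀
      have h2 : Tendsto (fun n : ℕ => Finset.Icc (-(n : ℤ)) ((n : ℤ) - 1)) atTop atTop := by
        apply tendsto_atTop_finset_of_monotone
        · intro a b hab
          refine Finset.Icc_subset_Icc ?_ ?_ <;> omega
        · intro x
          refine ⟨x.natAbs + 1, ?_⟩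
          simp only [Finset.mem_Icc]
          omega
      refine (h1.comp h2).congr fun n => ?_
      show (∑' i : ({x : ℤ | x ∉ Finset.Icc (-(n : ℤ)) ((n : ℤ) - 1)} : Set ℤ), nb0 i) = tail n
      rw [htaildef]
      rw [tsum_subtype {x : ℤ | x ∉ Finset.Icc (-(n : ℤ)) ((n : ℤ) - 1)} nb0]
      refine tsum_congr fun i => ?_
      by_cases h : i ∈ Finset.Icc (-(n : ℤ)) ((n : ℤ) - 1)
      · rw [Set.indicator_of_notMem (by simpa using h), Jacobi.ind_neg (by simpa using h)]
      · rw [Set.indicator_of_mem (by simpa using h), Jacobi.ind_pos (by simpa using h)]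
    set D : ℝ≥0∞ := CE * EK with hD
    have hDne : D ≠ ⊤ := ENNReal.mul_ne_top hCEne hEKne
    have hbound : (0 : ℝ≥0∞) < ENNReal.ofReal (ε / 2) / (D + 1) :=
      ENNReal.div_pos (ne_of_gt (ENNReal.ofReal_pos.2 (half_pos hε)))
        (ENNReal.add_ne_top.2 ⟨hDne, ENNReal.one_ne_top⟩)
    filter_upwards [(tendsto_order.1 htail0).2 _ hbound] with n hn z hz
    have hzC : z ∈ Jacobi.C0 lam := hKsub hz
    have hdiff := Jacobi.GG_diff (p z) (q n z) (hqor n z) (hBzt z hz)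
    have hTz : (∑' i, Jacobi.ind (q n z i ≠ p z i) ((‖p z i‖₊ : ℝ≥0) : ℝ≥0∞))
        ≤ CE * tail n := by
      rw [htaildef, ← ENNReal.tsum_mul_left]
      refine ENNReal.tsum_le_tsum fun i => ?_
      by_cases h : i ∈ Finset.Icc (-(n : ℤ)) ((n : ℤ) - 1)
      · have hqi : q n z i = p z i := by rw [hqdef]; simp only [if_pos h]
        rw [Jacobi.ind_neg (by simp [hqi])]
        exact zero_le
      · rw [Jacobi.ind_pos h]
        exact (Jacobi.ind_le_self _ _).trans (hcompE z hz i)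
    have hfin : ((‖Jacobi.GG (p z) - Jacobi.GG (q n z)‖₊ : ℝ≥0) : ℝ≥0∞)
        ≤ ENNReal.ofReal (ε / 2) := by
      refine hdiff.trans ?_
      calc (∑' i, Jacobi.ind (q n z i ≠ p z i) ((‖p z i‖₊ : ℝ≥0) : ℝ≥0∞))
            * ∑' m : ℕ, Jacobi.BB (p z) ^ m / (m.factorial : ℝ≥0∞)
          ≤ (CE * tail n) * EK := mul_le_mul' hTz (hEz z hz)
        _ = D * tail n := by rw [hD]; ring
        _ ≤ D * (ENNReal.ofReal (ε / 2) / (D + 1)) := mul_le_mul_right hn.le D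
        _ ≤ (D + 1) * (ENNReal.ofReal (ε / 2) / (D + 1)) := mul_le_mul_left le_self_add _
        _ ≤ ENNReal.ofReal (ε / 2) := ENNReal.mul_div_le
    rw [dist_eq_norm]
    have heq : Jacobi.charF lam γ z
        - Jacobi.FFon (Set.Icc (-(n : ℤ)) (n : ℤ)) (fun k => γ k ^ 2 / (lam k - z))
        = Jacobi.GG (p z) - Jacobi.GG (q n z) := by rw [hchar z, hFn n z]
    rw [heq]
    rw [← ofReal_norm_eq_coe_nnnorm] at hfin
    have hle := (ENNReal.ofReal_le_ofReal_iff (by positivity)).1 hfin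
    linarith
  refine ⟨?_, hTLU, fun z hz => hTLU.tendsto_at hz⟩
  intro z hz
  have hdiffC : DifferentiableOn ℂ (Jacobi.charF lam γ) (Jacobi.C0 lam) := by
    refine hTLU.differentiableOn (Filter.Eventually.of_forall fun n => ?_) hopen
    exact (hdiffFn n).congr fun u _ => hFn n u
  exact hdiffC.analyticAt (hopen.mem_nhds hz)

end
end

section
/- Under the convergence condition, for every z ∈ ℂ∖der(λ) one has ∑_{n=1}^∞ ∏_{k=1, λ_k ≠ z}^{n} |w_{k−1}/(z − λ_k)| < ∞ and ∑_{n=−∞}^{0} (1/|w_{n−1}|) ∏_{k=n, λ_k ≠ z}^{0} |w_{k−1}/(z − λ_k)| < ∞ (the products being taken over those indices k in the stated range with λ_k ≠ z). -/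
open Filter Topology
open scoped Classical

noncomputable section

private lemma aux_sq_le {x c : ℝ} (hx : 0 ≤ x) (hc : 0 ≤ c) (h : x ^ 2 ≤ c ^ 2) : x ≤ c := by
  nlinarith

private lemma aux_half_pow (n : ℕ) : ((2⁻¹ : ℝ) ^ n) ^ 2 = (4⁻¹ : ℝ) ^ n := by
  rw [← pow_mul, mul_comm, pow_mul]
  norm_num

private lemma aux_id2 (a x q : ℝ) (ha : a ≠ 0) :
    (a * q) * (x / a ^ 2) = q * (x / a) := by
  have h : a * a⁻¹ ^ 2 = a⁻¹ := by
    rw [sq, ← mul_assoc, mul_inv_cancel₀ ha, one_mul]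
  calc (a * q) * (x / a ^ 2) = q * x * (a * a⁻¹ ^ 2) := by
        rw [div_eq_mul_inv, ← inv_pow]; ring
    _ = q * x * a⁻¹ := by rw [h]
    _ = q * (x / a) := by rw [div_eq_mul_inv]; ring

private lemma aux_id1 (a b p : ℝ) (hb : b ≠ 0) :
    (a / b * p) ^ 2 * b = p ^ 2 * (a ^ 2 / b) := by
  have h : b⁻¹ ^ 2 * b = b⁻¹ := by
    rw [sq, mul_assoc, inv_mul_cancel₀ hb, mul_one]
  calc (a / b * p) ^ 2 * b = a ^ 2 * p ^ 2 * (b⁻¹ ^ 2 * b) := by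
        rw [div_eq_mul_inv]; ring
    _ = a ^ 2 * p ^ 2 * b⁻¹ := by rw [h]
    _ = p ^ 2 * (a ^ 2 / b) := by rw [div_eq_mul_inv]; ring

private lemma aux_eps (lam : ℤ → ℂ) (z : ℂ) (hz : z ∉ Jacobi.der lam) :
    ∃ ε > (0:ℝ), {n : ℤ | ‖lam n - z‖ < ε}.Finite := by
  simp only [Jacobi.der, Set.mem_setOf_eq, MapClusterPt, ClusterPt, not_neBot] at hz
  rw [Filter.inf_eq_bot_iff] at hz
  obtain ⟨U, hU, V, hV, hUV⟩ := hz
  obtain ⟨ε, hε, hball⟩ := Metric.mem_nhds_iff.mp hU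
  refine ⟨ε, hε, ?_⟩
  have hVf : {n : ℤ | lam n ∈ V}ᶜ.Finite := by
    have h2 : lam ⁻¹' V ∈ (cofinite : Filter ℤ) := Filter.mem_map.mp hV
    rw [Filter.mem_cofinite] at h2
    exact h2
  apply hVf.subset
  intro n hn
  simp only [Set.mem_compl_iff, Set.mem_setOf_eq] at hn ⊢
  intro hnV
  have h1 : lam n ∈ U := hball (by simpa [Metric.mem_ball, dist_eq_norm] using hn)
  have : lam n ∈ U ∩ V := ⟨h1, hnV⟩
  rw [hUV] at this
  exact this

/-- The "good index" estimates hold at all but finitely many indices. -/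
private lemma aux_good (lam w : ℤ → ℂ) (z : ℂ) (hconv : Jacobi.ConvCond lam w)
    (ε : ℝ) (hε : 0 < ε) (hfin : {n : ℤ | ‖lam n - z‖ < ε}.Finite) :
    {n : ℤ | ¬ (ε ≤ ‖lam n - z‖ ∧
      ‖w n‖ ^ 2 ≤ 4⁻¹ * (‖lam n - z‖ * ‖lam (n + 1) - z‖))}.Finite := by
  obtain ⟨z₀, hz₀, hsum⟩ := hconv
  have hne₀ : ∀ n : ℤ, lam n - z₀ ≠ 0 := by
    intro n h
    apply hz₀
    have : lam n = z₀ := by linear_combination h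
    exact this ▸ subset_closure (Set.mem_range_self n)
  set C : ℝ := 1 + ‖z - z₀‖ / ε with hC
  have hC0 : 0 < C := by positivity
  set η : ℝ := 4⁻¹ / C ^ 2 with hη
  have hη0 : 0 < η := by positivity
  have hev : ∀ᶠ n in (cofinite : Filter ℤ),
      ‖w n ^ 2 / ((lam n - z₀) * (lam (n + 1) - z₀))‖ < η :=
    hsum.tendsto_cofinite_zero.eventually_lt_const hη0
  have hinj : Function.Injective (fun n : ℤ => n + 1) := fun a b h => by simpa using h
  have hfin1 : {n : ℤ | ‖lam (n + 1) - z‖ < ε}.Finite := by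
    have : {n : ℤ | ‖lam (n + 1) - z‖ < ε}
        = (fun n : ℤ => n + 1) ⁻¹' {n : ℤ | ‖lam n - z‖ < ε} := rfl
    rw [this]
    exact hfin.preimage hinj.injOn
  have e1 : ∀ᶠ n in (cofinite : Filter ℤ), ε ≤ ‖lam n - z‖ := by
    filter_upwards [hfin.eventually_cofinite_notMem] with n hn
    simpa [not_lt] using hn
  have e2 : ∀ᶠ n in (cofinite : Filter ℤ), ε ≤ ‖lam (n + 1) - z‖ := by
    filter_upwards [hfin1.eventually_cofinite_notMem] with n hn
    simpa [not_lt] using hn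
  rw [← Filter.eventually_cofinite]
  filter_upwards [e1, e2, hev] with n h1 h2 h3
  refine ⟨h1, ?_⟩
  have hA0 : 0 < ‖lam n - z‖ := lt_of_lt_of_le hε h1
  have hB0 : 0 < ‖lam (n + 1) - z‖ := lt_of_lt_of_le hε h2
  have hbound : ∀ m : ℤ, ε ≤ ‖lam m - z‖ → ‖lam m - z₀‖ ≤ C * ‖lam m - z‖ := by
    intro m hm
    have htri : ‖lam m - z₀‖ ≤ ‖lam m - z‖ + ‖z - z₀‖ := by
      calc ‖lam m - z₀‖ = ‖(lam m - z) + (z - z₀)‖ := by ring_nf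
        _ ≤ ‖lam m - z‖ + ‖z - z₀‖ := norm_add_le _ _
    have hcoef : 0 ≤ ‖z - z₀‖ / ε := by positivity
    have h4 : ‖z - z₀‖ / ε * ε ≤ ‖z - z₀‖ / ε * ‖lam m - z‖ :=
      mul_le_mul_of_nonneg_left hm hcoef
    have h5 : ‖z - z₀‖ / ε * ε = ‖z - z₀‖ := div_mul_cancel₀ _ (ne_of_gt hε)
    have h6 : C * ‖lam m - z‖ = ‖lam m - z‖ + ‖z - z₀‖ / ε * ‖lam m - z‖ := by
      rw [hC]; ring
    calc ‖lam m - z₀‖ ≤ ‖lam m - z‖ + ‖z - z₀‖ := htri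
      _ = ‖lam m - z‖ + ‖z - z₀‖ / ε * ε := by rw [h5]
      _ ≤ ‖lam m - z‖ + ‖z - z₀‖ / ε * ‖lam m - z‖ := by linarith
      _ = C * ‖lam m - z‖ := h6.symm
  have hXA : ‖lam n - z₀‖ ≤ C * ‖lam n - z‖ := hbound n h1
  have hYB : ‖lam (n + 1) - z₀‖ ≤ C * ‖lam (n + 1) - z‖ := hbound (n + 1) h2
  have hwn : ‖w n‖ ^ 2 = ‖w n ^ 2 / ((lam n - z₀) * (lam (n + 1) - z₀))‖ *
      (‖lam n - z₀‖ * ‖lam (n + 1) - z₀‖) := by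
    rw [norm_div, norm_mul, norm_pow]
    rw [div_mul_cancel₀]
    exact mul_ne_zero (norm_ne_zero_iff.mpr (hne₀ n)) (norm_ne_zero_iff.mpr (hne₀ (n + 1)))
  have hprod : ‖lam n - z₀‖ * ‖lam (n + 1) - z₀‖
      ≤ (C * ‖lam n - z‖) * (C * ‖lam (n + 1) - z‖) :=
    mul_le_mul hXA hYB (norm_nonneg _) (by positivity)
  have hfinal : ‖w n‖ ^ 2 ≤ η * ((C * ‖lam n - z‖) * (C * ‖lam (n + 1) - z‖)) := by
    rw [hwn]
    exact mul_le_mul h3.le hprod (by positivity) hη0.le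
  have hid : η * ((C * ‖lam n - z‖) * (C * ‖lam (n + 1) - z‖))
      = 4⁻¹ * (‖lam n - z‖ * ‖lam (n + 1) - z‖) := by
    rw [hη]
    field_simp
  rw [hid] at hfinal
  exact hfinal

private lemma aux_pos_bound (lam w : ℤ → ℂ) (z : ℂ) (ε : ℝ) (hε : 0 < ε) (N : ℤ)
    (hgood : ∀ k : ℤ, N ≤ k →
      ε ≤ ‖lam k - z‖ ∧ ‖w k‖ ^ 2 ≤ 4⁻¹ * (‖lam k - z‖ * ‖lam (k + 1) - z‖)) :
    ∀ m, N ≤ m → (∏ k ∈ Finset.Ioc N m, ‖w (k - 1) / (z - lam k)‖) ^ 2 * ‖lam m - z‖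
      ≤ ‖lam N - z‖ * (4⁻¹ : ℝ) ^ (m - N).toNat := by
  refine Int.le_induction ?_ ?_
  · simp
  · intro m hm ih
    have hins : Finset.Ioc N (m + 1) = insert (m + 1) (Finset.Ioc N m) := by
      ext x; simp only [Finset.mem_Ioc, Finset.mem_insert]; omega
    have hnotmem : (m + 1) ∉ Finset.Ioc N m := by simp
    rw [hins, Finset.prod_insert hnotmem]
    have hB : ε ≤ ‖lam (m + 1) - z‖ := (hgood (m + 1) (by omega)).1
    have hw2 : ‖w m‖ ^ 2 ≤ 4⁻¹ * (‖lam m - z‖ * ‖lam (m + 1) - z‖) := (hgood m hm).2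
    have hB0 : (0:ℝ) < ‖lam (m + 1) - z‖ := lt_of_lt_of_le hε hB
    have hbm : ‖w (m + 1 - 1) / (z - lam (m + 1))‖ = ‖w m‖ / ‖lam (m + 1) - z‖ := by
      rw [norm_div, norm_sub_rev]
      ring_nf
    rw [hbm]
    set P : ℝ := ∏ k ∈ Finset.Ioc N m, ‖w (k - 1) / (z - lam k)‖ with hP
    rw [aux_id1 _ _ _ (ne_of_gt hB0)]
    have h1 : ‖w m‖ ^ 2 / ‖lam (m + 1) - z‖ ≤ 4⁻¹ * ‖lam m - z‖ := by
      rw [div_le_iff₀ hB0]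
      calc ‖w m‖ ^ 2 ≤ 4⁻¹ * (‖lam m - z‖ * ‖lam (m + 1) - z‖) := hw2
        _ = 4⁻¹ * ‖lam m - z‖ * ‖lam (m + 1) - z‖ := by ring
    have htn : (m + 1 - N).toNat = (m - N).toNat + 1 := by omega
    rw [htn]
    calc P ^ 2 * (‖w m‖ ^ 2 / ‖lam (m + 1) - z‖)
        ≤ P ^ 2 * (4⁻¹ * ‖lam m - z‖) := mul_le_mul_of_nonneg_left h1 (sq_nonneg P)
      _ = 4⁻¹ * (P ^ 2 * ‖lam m - z‖) := by ring
      _ ≤ 4⁻¹ * (‖lam N - z‖ * 4⁻¹ ^ (m - N).toNat) :=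
          mul_le_mul_of_nonneg_left ih (by norm_num)
      _ = ‖lam N - z‖ * 4⁻¹ ^ ((m - N).toNat + 1) := by ring

private lemma aux_neg_bound (lam w : ℤ → ℂ) (z : ℂ) (ε : ℝ) (hε : 0 < ε) (M : ℤ)
    (hgood : ∀ k : ℤ, k ≤ M →
      ε ≤ ‖lam k - z‖ ∧ ‖w k‖ ^ 2 ≤ 4⁻¹ * (‖lam k - z‖ * ‖lam (k + 1) - z‖)) :
    ∀ m, m ≤ M → (∏ k ∈ Finset.Ioc m M, ‖w (k - 1) / (z - lam k)‖) ^ 2 * ‖lam M - z‖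
      ≤ ‖lam m - z‖ * (4⁻¹ : ℝ) ^ (M - m).toNat := by
  refine Int.le_induction_down ?_ ?_
  · simp
  · intro m hmM ih
    have hins : Finset.Ioc (m - 1) M = insert m (Finset.Ioc m M) := by
      ext x; simp only [Finset.mem_Ioc, Finset.mem_insert]; omega
    have hnotmem : m ∉ Finset.Ioc m M := by simp
    rw [hins, Finset.prod_insert hnotmem]
    have hA : ε ≤ ‖lam m - z‖ := (hgood m hmM).1
    have hw2 : ‖w (m - 1)‖ ^ 2 ≤ 4⁻¹ * (‖lam (m - 1) - z‖ * ‖lam m - z‖) := by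
      have h := (hgood (m - 1) (by omega)).2
      simpa using h
    have hA0 : (0:ℝ) < ‖lam m - z‖ := lt_of_lt_of_le hε hA
    have hbm : ‖w (m - 1) / (z - lam m)‖ = ‖w (m - 1)‖ / ‖lam m - z‖ := by
      rw [norm_div, norm_sub_rev]
    rw [hbm]
    set R : ℝ := ∏ k ∈ Finset.Ioc m M, ‖w (k - 1) / (z - lam k)‖ with hR
    have hkey : (‖w (m - 1)‖ / ‖lam m - z‖ * R) ^ 2 * ‖lam M - z‖
        = (R ^ 2 * ‖lam M - z‖) * (‖w (m - 1)‖ ^ 2 / ‖lam m - z‖ ^ 2) := by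
      rw [div_eq_mul_inv, div_eq_mul_inv, ← inv_pow]; ring
    rw [hkey]
    have htn : (M - (m - 1)).toNat = (M - m).toNat + 1 := by omega
    rw [htn]
    have hd : (0:ℝ) ≤ ‖w (m - 1)‖ ^ 2 / ‖lam m - z‖ ^ 2 := by positivity
    calc (R ^ 2 * ‖lam M - z‖) * (‖w (m - 1)‖ ^ 2 / ‖lam m - z‖ ^ 2)
        ≤ (‖lam m - z‖ * 4⁻¹ ^ (M - m).toNat) * (‖w (m - 1)‖ ^ 2 / ‖lam m - z‖ ^ 2) :=
          mul_le_mul_of_nonneg_right ih hd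
      _ = 4⁻¹ ^ (M - m).toNat * (‖w (m - 1)‖ ^ 2 / ‖lam m - z‖) :=
          aux_id2 _ _ _ (ne_of_gt hA0)
      _ ≤ 4⁻¹ ^ (M - m).toNat * (4⁻¹ * ‖lam (m - 1) - z‖) := by
          apply mul_le_mul_of_nonneg_left _ (by positivity)
          rw [div_le_iff₀ hA0]
          calc ‖w (m - 1)‖ ^ 2 ≤ 4⁻¹ * (‖lam (m - 1) - z‖ * ‖lam m - z‖) := hw2
            _ = 4⁻¹ * ‖lam (m - 1) - z‖ * ‖lam m - z‖ := by ring
      _ = ‖lam (m - 1) - z‖ * 4⁻¹ ^ ((M - m).toNat + 1) := by ring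

/-- summability of the two families of products (Lemma on summability of
`𝒫` at `±∞`). -/
theorem statement3 (lam w : ℤ → ℂ) (hw : ∀ n, w n ≠ 0) (hconv : Jacobi.ConvCond lam w)
    (z : ℂ) (hz : z ∉ Jacobi.der lam) :
    Summable (fun n : ℕ =>
      ∏ k ∈ (Finset.Icc (1 : ℤ) ((n : ℤ) + 1)).filter (fun k => lam k ≠ z),
        ‖w (k - 1) / (z - lam k)‖) ∧
    Summable (fun n : ℕ => (1 / ‖w (-(n : ℤ) - 1)‖) *
      ∏ k ∈ (Finset.Icc (-(n : ℤ)) (0 : ℤ)).filter (fun k => lam k ≠ z),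
        ‖w (k - 1) / (z - lam k)‖) := by
  obtain ⟨ε, hε, hfin⟩ := aux_eps lam z hz
  have hbadfin := aux_good lam w z hconv ε hε hfin
  set N₀ : ℕ := hbadfin.toFinset.sup Int.natAbs + 1 with hN₀
  have hgoodP : ∀ k : ℤ, (N₀ : ℤ) ≤ k →
      ε ≤ ‖lam k - z‖ ∧ ‖w k‖ ^ 2 ≤ 4⁻¹ * (‖lam k - z‖ * ‖lam (k + 1) - z‖) := by
    intro k hk
    by_contra hbad
    have hk' : k ∈ hbadfin.toFinset := (Set.Finite.mem_toFinset _).mpr hbad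
    have hle := Finset.le_sup (f := Int.natAbs) hk'
    omega
  have hgoodM : ∀ k : ℤ, k ≤ -(N₀ : ℤ) →
      ε ≤ ‖lam k - z‖ ∧ ‖w k‖ ^ 2 ≤ 4⁻¹ * (‖lam k - z‖ * ‖lam (k + 1) - z‖) := by
    intro k hk
    by_contra hbad
    have hk' : k ∈ hbadfin.toFinset := (Set.Finite.mem_toFinset _).mpr hbad
    have hle := Finset.le_sup (f := Int.natAbs) hk'
    omega
  have hne : ∀ k : ℤ, ε ≤ ‖lam k - z‖ → lam k ≠ z := by
    intro k h hk
    rw [hk, sub_self, norm_zero] at h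
    linarith
  clear_value N₀
  clear hN₀
  constructor
  · -- positive side
    rw [← summable_nat_add_iff N₀]
    set D : ℝ := ∏ k ∈ (Finset.Icc (1:ℤ) (N₀:ℤ)).filter (fun k => lam k ≠ z),
      ‖w (k - 1) / (z - lam k)‖ with hDdef
    have hD0 : 0 ≤ D := Finset.prod_nonneg fun _ _ => norm_nonneg _
    set c : ℝ := Real.sqrt (‖lam (N₀:ℤ) - z‖ / ε) with hcdef
    have hc0 : 0 ≤ c := Real.sqrt_nonneg _
    refine Summable.of_nonneg_of_le (fun n => ?_) (fun n => ?_)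
      ((summable_geometric_of_lt_one (r := (2⁻¹:ℝ)) (by norm_num) (by norm_num)).mul_left (D * c))
    · exact Finset.prod_nonneg fun _ _ => norm_nonneg _
    · push_cast
      set m : ℤ := (n : ℤ) + (N₀ : ℤ) + 1 with hmdef
      have hNm : (N₀ : ℤ) ≤ m := by omega
      have hsplit : Finset.Icc (1:ℤ) m = Finset.Icc 1 (N₀:ℤ) ∪ Finset.Ioc (N₀:ℤ) m := by
        ext x
        simp only [Finset.mem_Icc, Finset.mem_union, Finset.mem_Ioc]
        omega
      have hdisj : Disjoint ((Finset.Icc (1:ℤ) (N₀:ℤ)).filter (fun k => lam k ≠ z))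
          ((Finset.Ioc (N₀:ℤ) m).filter (fun k => lam k ≠ z)) := by
        apply Finset.disjoint_filter_filter
        rw [Finset.disjoint_left]
        intro a ha hb
        simp only [Finset.mem_Icc] at ha
        simp only [Finset.mem_Ioc] at hb
        omega
      have hfiltIoc : (Finset.Ioc (N₀:ℤ) m).filter (fun k => lam k ≠ z)
          = Finset.Ioc (N₀:ℤ) m :=
        Finset.filter_true_of_mem fun x hx =>
          hne x (hgoodP x (le_of_lt (Finset.mem_Ioc.mp hx).1)).1
      rw [hsplit, Finset.filter_union, Finset.prod_union hdisj, hfiltIoc]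
      set Q : ℝ := ∏ k ∈ Finset.Ioc (N₀:ℤ) m, ‖w (k - 1) / (z - lam k)‖ with hQdef
      have hQ0 : 0 ≤ Q := Finset.prod_nonneg fun _ _ => norm_nonneg _
      have hkey := aux_pos_bound lam w z ε hε (N₀:ℤ) (fun k hk => hgoodP k hk) m hNm
      have htn : (m - (N₀:ℤ)).toNat = n + 1 := by omega
      rw [htn] at hkey
      have hAm : ε ≤ ‖lam m - z‖ := (hgoodP m hNm).1
      have hQle : Q ≤ c * 2⁻¹ ^ n := by
        apply aux_sq_le hQ0 (by positivity)
        have hc2 : (c * 2⁻¹ ^ n) ^ 2 = ‖lam (N₀:ℤ) - z‖ / ε * 4⁻¹ ^ n := by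
          rw [mul_pow, aux_half_pow, hcdef, Real.sq_sqrt (by positivity)]
        rw [hc2, div_mul_eq_mul_div, le_div_iff₀ hε]
        have h45 : (4⁻¹:ℝ) ^ (n + 1) ≤ 4⁻¹ ^ n := by
          rw [pow_succ]
          nlinarith [pow_nonneg (by norm_num : (0:ℝ) ≤ 4⁻¹) n]
        have h6 : Q ^ 2 * ε ≤ Q ^ 2 * ‖lam m - z‖ :=
          mul_le_mul_of_nonneg_left hAm (sq_nonneg _)
        have h7 : ‖lam (N₀:ℤ) - z‖ * 4⁻¹ ^ (n + 1) ≤ ‖lam (N₀:ℤ) - z‖ * 4⁻¹ ^ n :=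
          mul_le_mul_of_nonneg_left h45 (norm_nonneg _)
        linarith [hkey]
      calc D * Q ≤ D * (c * 2⁻¹ ^ n) := mul_le_mul_of_nonneg_left hQle hD0
        _ = D * c * 2⁻¹ ^ n := by ring
  · -- negative side
    rw [← summable_nat_add_iff N₀]
    set M : ℤ := -(N₀ : ℤ) with hMdef
    set D₂ : ℝ := ∏ k ∈ (Finset.Ioc M 0).filter (fun k => lam k ≠ z),
      ‖w (k - 1) / (z - lam k)‖ with hD₂def
    have hD₂0 : 0 ≤ D₂ := Finset.prod_nonneg fun _ _ => norm_nonneg _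
    refine Summable.of_nonneg_of_le (fun n => ?_) (fun n => ?_)
      ((summable_geometric_of_lt_one (r := (2⁻¹:ℝ)) (by norm_num) (by norm_num)).mul_left (D₂ * ε⁻¹))
    · exact mul_nonneg (by positivity) (Finset.prod_nonneg fun _ _ => norm_nonneg _)
    · push_cast
      set m : ℤ := -((n : ℤ) + (N₀ : ℤ)) with hmdef
      have hmM : m ≤ M := by omega
      have hM0 : M ≤ 0 := by omega
      have hsplit : Finset.Icc m (0:ℤ) = Finset.Icc m M ∪ Finset.Ioc M 0 := by
        ext x
        simp only [Finset.mem_Icc, Finset.mem_union, Finset.mem_Ioc]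
        omega
      have hdisj : Disjoint ((Finset.Icc m M).filter (fun k => lam k ≠ z))
          ((Finset.Ioc M (0:ℤ)).filter (fun k => lam k ≠ z)) := by
        apply Finset.disjoint_filter_filter
        rw [Finset.disjoint_left]
        intro a ha hb
        simp only [Finset.mem_Icc] at ha
        simp only [Finset.mem_Ioc] at hb
        omega
      have hfiltIcc : (Finset.Icc m M).filter (fun k => lam k ≠ z) = Finset.Icc m M :=
        Finset.filter_true_of_mem fun x hx =>
          hne x (hgoodM x (Finset.mem_Icc.mp hx).2).1
      rw [hsplit, Finset.filter_union, Finset.prod_union hdisj, hfiltIcc]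
      have hins : Finset.Icc m M = insert m (Finset.Ioc m M) := by
        ext x
        simp only [Finset.mem_Icc, Finset.mem_Ioc, Finset.mem_insert]
        omega
      have hnotmem : m ∉ Finset.Ioc m M := by simp
      rw [hins, Finset.prod_insert hnotmem]
      have hbm : ‖w (m - 1) / (z - lam m)‖ = ‖w (m - 1)‖ / ‖lam m - z‖ := by
        rw [norm_div, norm_sub_rev]
      rw [hbm]
      set R : ℝ := ∏ k ∈ Finset.Ioc m M, ‖w (k - 1) / (z - lam k)‖ with hRdef
      have hR0 : 0 ≤ R := Finset.prod_nonneg fun _ _ => norm_nonneg _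
      have hwne : ‖w (m - 1)‖ ≠ 0 := norm_ne_zero_iff.mpr (hw _)
      have hAm : ε ≤ ‖lam m - z‖ := (hgoodM m hmM).1
      have hAm0 : (0:ℝ) < ‖lam m - z‖ := lt_of_lt_of_le hε hAm
      have hcanc : ‖w (m - 1)‖⁻¹ * ‖w (m - 1)‖ = 1 := inv_mul_cancel₀ hwne
      have hid : 1 / ‖w (m - 1)‖ * (‖w (m - 1)‖ / ‖lam m - z‖ * R * D₂)
          = D₂ * (R / ‖lam m - z‖) := by
        calc 1 / ‖w (m - 1)‖ * (‖w (m - 1)‖ / ‖lam m - z‖ * R * D₂)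
            = (‖w (m - 1)‖⁻¹ * ‖w (m - 1)‖) * (R * D₂ * ‖lam m - z‖⁻¹) := by
              rw [one_div, div_eq_mul_inv]; ring
          _ = D₂ * (R / ‖lam m - z‖) := by rw [hcanc, div_eq_mul_inv]; ring
      rw [hid]
      have hKM : ε ≤ ‖lam M - z‖ := (hgoodM M le_rfl).1
      have hkey := aux_neg_bound lam w z ε hε M (fun k hk => hgoodM k hk) m hmM
      have htn : (M - m).toNat = n := by omega
      rw [htn] at hkey
      have hRA : R / ‖lam m - z‖ ≤ ε⁻¹ * 2⁻¹ ^ n := by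
        apply aux_sq_le (div_nonneg hR0 (norm_nonneg _))
          (mul_nonneg (inv_nonneg.mpr hε.le) (pow_nonneg (by norm_num) n))
        have hc2 : (ε⁻¹ * 2⁻¹ ^ n) ^ 2 = 4⁻¹ ^ n / ε ^ 2 := by
          rw [mul_pow, aux_half_pow, inv_pow, div_eq_inv_mul]
        rw [div_pow, hc2, div_le_div_iff₀ (pow_pos hAm0 2) (pow_pos hε 2)]
        have hq0 : (0:ℝ) ≤ 4⁻¹ ^ n := pow_nonneg (by norm_num) n
        have h1 : R ^ 2 * ε ≤ R ^ 2 * ‖lam M - z‖ :=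
          mul_le_mul_of_nonneg_left hKM (sq_nonneg R)
        have h2 : R ^ 2 * ε * ε ≤ R ^ 2 * ‖lam M - z‖ * ε :=
          mul_le_mul_of_nonneg_right h1 hε.le
        have h3 : R ^ 2 * ‖lam M - z‖ * ε ≤ ‖lam m - z‖ * 4⁻¹ ^ n * ε :=
          mul_le_mul_of_nonneg_right hkey hε.le
        have h4 : ‖lam m - z‖ * 4⁻¹ ^ n * ε ≤ ‖lam m - z‖ * 4⁻¹ ^ n * ‖lam m - z‖ :=
          mul_le_mul_of_nonneg_left hAm (mul_nonneg (norm_nonneg _) hq0)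
        nlinarith [h2, h3, h4]
      calc D₂ * (R / ‖lam m - z‖) ≤ D₂ * (ε⁻¹ * 2⁻¹ ^ n) :=
            mul_le_mul_of_nonneg_left hRA hD₂0
        _ = D₂ * ε⁻¹ * 2⁻¹ ^ n := by ring

end
end

section
/- Let J_min = J_max =: J and suppose the resolvent set ρ(J) is nonempty. Then for every z ∈ ℂ and every n ∈ ℕ, the dimension of the orthogonal complement of Ker((J−z)^n) inside Ker((J−z)^{n+1}) is at most 1; in particular dim Ker((J−z)^n) ≤ n for all n ∈ ℕ. -/
open Filter Topology
open scoped Classical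

noncomputable section

namespace S10
open Jacobi

variable {lam w : ℤ → ℂ} {z : ℂ}

lemma jop_def (u : ℤ → ℂ) (n : ℤ) :
    Jop lam w u n = w (n - 1) * u (n - 1) + lam n * u n + w n * u (n + 1) := rfl

/-- A solution vanishing at two consecutive points vanishes everywhere. -/
lemma sol_eq_zero (hw : ∀ n, w n ≠ 0) {u : ℤ → ℂ}
    (hu : ∀ n, Jop lam w u n = z * u n) (m : ℤ)
    (h0 : u m = 0) (h1 : u (m + 1) = 0) : ∀ n, u n = 0 := by
  have key : ∀ n : ℤ, u (m + n) = 0 ∧ u (m + n + 1) = 0 := by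
    intro n
    induction n using Int.induction_on with
    | zero => simpa using ⟨h0, h1⟩
    | succ k ih =>
      obtain ⟨p, q⟩ := ih
      refine ⟨by simpa [add_assoc] using q, ?_⟩
      have h := hu (m + k + 1)
      rw [jop_def] at h
      have e1 : (m + k + 1 - 1 : ℤ) = m + k := by ring
      rw [e1, p, q] at h
      have : w (m + k + 1) * u (m + k + 1 + 1) = 0 := by linear_combination h
      have := mul_eq_zero.mp this
      rcases this with h' | h'
      · exact absurd h' (hw _)
      · have e2 : (m + (k + 1 : ℤ) + 1) = m + k + 1 + 1 := by ring
        rw [show (m + (↑k + 1) + 1 : ℤ) = m + k + 1 + 1 by push_cast; ring]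
        exact h'
    | pred k ih =>
      obtain ⟨p, q⟩ := ih
      have h := hu (m + -(k : ℤ))
      rw [jop_def] at h
      rw [show (m + -(k:ℤ) + 1) = m + -(k:ℤ) + 1 from rfl] at h
      have q' : u (m + -(k:ℤ) + 1) = 0 := q
      rw [p, q'] at h
      have : w (m + -(k:ℤ) - 1) * u (m + -(k:ℤ) - 1) = 0 := by linear_combination h
      rcases mul_eq_zero.mp this with h' | h'
      · exact absurd h' (hw _)
      · constructor
        · rw [show (m + (-(k:ℤ) - 1)) = m + -(k:ℤ) - 1 by ring]; exact h'
        · rw [show (m + (-(k:ℤ) - 1) + 1) = m + -(k:ℤ) by ring]; exact p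
  intro n
  have := (key (n - m)).1
  rwa [show m + (n - m) = n by ring] at this

/-- The Wronskian. -/
def Wr (w : ℤ → ℂ) (u v : ℤ → ℂ) (n : ℤ) : ℂ :=
  w n * (u n * v (n + 1) - u (n + 1) * v n)

lemma wr_const {u v : ℤ → ℂ}
    (hu : ∀ n, Jop lam w u n = z * u n) (hv : ∀ n, Jop lam w v n = z * v n) (n : ℤ) :
    Wr w u v n = Wr w u v 0 := by
  have step : ∀ k : ℤ, Wr w u v k = Wr w u v (k - 1) := by
    intro k
    have hu' := hu k
    have hv' := hv k
    rw [jop_def] at hu' hv'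
    unfold Wr
    rw [show (k - 1 + 1 : ℤ) = k by ring]
    linear_combination u k * hv' - v k * hu'
  induction n using Int.induction_on with
  | zero => rfl
  | succ k ih =>
    have := step ((k : ℤ) + 1)
    rw [show ((k:ℤ) + 1 - 1) = (k:ℤ) by ring] at this
    rw [this, ih]
  | pred k ih =>
    rw [← step (-(k : ℤ))]
    exact ih

/-- If the Wronskian vanishes and `u ≠ 0`, then `v` is a multiple of `u`. -/
lemma sol_dependent (hw : ∀ n, w n ≠ 0) {u v : ℤ → ℂ}
    (hu : ∀ n, Jop lam w u n = z * u n) (hv : ∀ n, Jop lam w v n = z * v n)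
    (hW : Wr w u v 0 = 0) {m : ℤ} (hm : u m ≠ 0) :
    ∀ n, v n = (v m / u m) * u n := by
  set c := v m / u m with hc
  have hdiff : ∀ n, Jop lam w (fun k => v k - c * u k) n = z * (v n - c * u n) := by
    intro n
    have hu' := hu n; have hv' := hv n
    rw [jop_def] at hu' hv' ⊢
    beta_reduce
    linear_combination hv' - c * hu'
  have h0 : v m - c * u m = 0 := by rw [hc, div_mul_cancel₀ _ hm, sub_self]
  have hWm : Wr w u v m = 0 := by rw [wr_const hu hv m, hW]
  have h1 : v (m + 1) - c * u (m + 1) = 0 := by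
    unfold Wr at hWm
    rcases mul_eq_zero.mp hWm with h' | h'
    · exact absurd h' (hw _)
    · have : u m * v (m + 1) = u (m + 1) * v m := by linear_combination h'
      rw [hc]
      field_simp
      linear_combination this
  have := sol_eq_zero hw hdiff m h0 h1
  intro n
  have h := this n
  have : v n - c * u n = 0 := h
  linear_combination this

end S10
section KerStruct
open Jacobi

variable (T : Jacobi.ℓ2 →ₗ.[ℂ] Jacobi.ℓ2) (z : ℂ)

lemma mem_iterKer_succ {x : Jacobi.ℓ2} {n : ℕ} :
    x ∈ iterKer T z (n + 1) ↔
      ∃ hx : x ∈ T.domain, ((T ⟨x, hx⟩ : Jacobi.ℓ2) - z • x) ∈ iterKer T z n := Iff.rfl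

lemma iterKer_zero_mem (n : ℕ) : (0 : Jacobi.ℓ2) ∈ iterKer T z n := by
  induction n with
  | zero => exact rfl
  | succ n ih =>
    refine ⟨T.domain.zero_mem, ?_⟩
    have e : (⟨0, T.domain.zero_mem⟩ : T.domain) = 0 := rfl
    rw [e]
    simpa using ih

lemma iterKer_add_mem {x y : Jacobi.ℓ2} {n : ℕ} (hx : x ∈ iterKer T z n)
    (hy : y ∈ iterKer T z n) : x + y ∈ iterKer T z n := by
  induction n generalizing x y with
  | zero =>
    have hx' : x = 0 := hx
    have hy' : y = 0 := hy
    show x + y ∈ ({0} : Set Jacobi.ℓ2)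
    simp [hx', hy']
  | succ n ih =>
    obtain ⟨hx1, hx2⟩ := hx
    obtain ⟨hy1, hy2⟩ := hy
    have hxy : x + y ∈ T.domain := T.domain.add_mem hx1 hy1
    refine ⟨hxy, ?_⟩
    have e : (⟨x + y, hxy⟩ : T.domain) = ⟨x, hx1⟩ + ⟨y, hy1⟩ := rfl
    rw [e, T.map_add]
    have e2 : (T ⟨x, hx1⟩ : Jacobi.ℓ2) + T ⟨y, hy1⟩ - z • (x + y)
        = ((T ⟨x, hx1⟩ : Jacobi.ℓ2) - z • x) + ((T ⟨y, hy1⟩ : Jacobi.ℓ2) - z • y) := by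
      rw [smul_add]; abel
    rw [e2]
    exact ih hx2 hy2

lemma iterKer_smul_mem (c : ℂ) {x : Jacobi.ℓ2} {n : ℕ} (hx : x ∈ iterKer T z n) :
    c • x ∈ iterKer T z n := by
  induction n generalizing x with
  | zero =>
    have hx' : x = 0 := hx
    show c • x ∈ ({0} : Set Jacobi.ℓ2)
    simp [hx']
  | succ n ih =>
    obtain ⟨hx1, hx2⟩ := hx
    have hcx : c • x ∈ T.domain := T.domain.smul_mem c hx1
    refine ⟨hcx, ?_⟩
    have e : (⟨c • x, hcx⟩ : T.domain) = c • ⟨x, hx1⟩ := rfl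
    rw [e, T.map_smul]
    have e2 : c • (T ⟨x, hx1⟩ : Jacobi.ℓ2) - z • (c • x)
        = c • ((T ⟨x, hx1⟩ : Jacobi.ℓ2) - z • x) := by
      rw [smul_sub, smul_comm]
    rw [e2]
    exact ih hx2

/-- `Ker (T - z)^n` as a submodule. -/
def kerS (n : ℕ) : Submodule ℂ Jacobi.ℓ2 where
  carrier := iterKer T z n
  add_mem' := fun hx hy => iterKer_add_mem T z hx hy
  zero_mem' := iterKer_zero_mem T z n
  smul_mem' := fun c {x} hx => iterKer_smul_mem T z c hx

lemma kerS_coe (n : ℕ) : (kerS T z n : Set Jacobi.ℓ2) = iterKer T z n := rfl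

lemma iterKer_mono {n : ℕ} : iterKer T z n ⊆ iterKer T z (n + 1) := by
  induction n with
  | zero =>
    intro x hx
    have hx' : x = 0 := hx
    subst hx'
    exact iterKer_zero_mem T z 1
  | succ n ih =>
    rintro x ⟨hx1, hx2⟩
    exact ⟨hx1, ih hx2⟩

lemma kerS_le_dom (n : ℕ) : kerS T z (n + 1) ≤ T.domain := by
  intro x hx
  exact Exists.choose (hx : x ∈ iterKer T z (n + 1))

/-- The map `x ↦ (T - z) x` on `Ker (T-z)^{n+1}`. -/
def Dres (n : ℕ) : kerS T z (n + 1) →ₗ[ℂ] Jacobi.ℓ2 :=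
  T.toFun.comp (Submodule.inclusion (kerS_le_dom T z n)) - z • (kerS T z (n + 1)).subtype

lemma Dres_apply (n : ℕ) (x : kerS T z (n + 1)) (hx : (x : Jacobi.ℓ2) ∈ T.domain) :
    Dres T z n x = (T ⟨x.1, hx⟩ : Jacobi.ℓ2) - z • x.1 := rfl

lemma Dres_mem (n : ℕ) (x : kerS T z (n + 1)) : Dres T z n x ∈ kerS T z n := by
  obtain ⟨hd, hmem⟩ := (x.2 : (x : Jacobi.ℓ2) ∈ iterKer T z (n + 1))
  rw [Dres_apply T z n x hd]
  exact hmem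

lemma Dres_zero_mem_ker1 (n : ℕ) (x : kerS T z (n + 1)) (h : Dres T z n x = 0) :
    (x : Jacobi.ℓ2) ∈ iterKer T z 1 := by
  have hd : (x : Jacobi.ℓ2) ∈ T.domain := kerS_le_dom T z n x.2
  refine ⟨hd, ?_⟩
  have : (T ⟨x.1, hd⟩ : Jacobi.ℓ2) - z • x.1 = 0 := by
    rw [← Dres_apply T z n x hd, h]
  rw [this]
  exact rfl

/-- Iterated map into `Ker (T-z)`. -/
def Psi : (n : ℕ) → (kerS T z (n + 1) →ₗ[ℂ] kerS T z 1)
  | 0 => LinearMap.id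
  | n + 1 => (Psi n).comp
      (LinearMap.codRestrict (kerS T z (n + 1)) (Dres T z (n + 1)) (Dres_mem T z (n + 1)))

lemma Psi_zero_mem (n : ℕ) (x : kerS T z (n + 1)) (h : Psi T z n x = 0) :
    (x : Jacobi.ℓ2) ∈ iterKer T z n := by
  induction n with
  | zero =>
    have : x = 0 := h
    rw [this]
    exact rfl
  | succ n ih =>
    have h' : Psi T z n (LinearMap.codRestrict (kerS T z (n + 1)) (Dres T z (n + 1))
        (Dres_mem T z (n + 1)) x) = 0 := h
    have hmem := ih _ h'
    exact ⟨kerS_le_dom T z (n+1) x.2, hmem⟩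

end KerStruct
section RankBounds
open Jacobi

variable (T : Jacobi.ℓ2 →ₗ.[ℂ] Jacobi.ℓ2) (z : ℂ)

lemma kerS_zero_eq_bot : kerS T z 0 = ⊥ := by
  ext x
  constructor
  · intro hx
    exact (hx : x ∈ ({0} : Set Jacobi.ℓ2))
  · intro hx
    have : x = 0 := hx
    exact (this ▸ iterKer_zero_mem T z 0)

lemma rank_kerS_one_ker_Dres (n : ℕ) :
    Module.rank ℂ ↥(LinearMap.ker (Dres T z n)) ≤ Module.rank ℂ ↥(kerS T z 1) := by
  let g : ↥(LinearMap.ker (Dres T z n)) →ₗ[ℂ] ↥(kerS T z 1) :=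
    { toFun := fun x => ⟨x.1.1, Dres_zero_mem_ker1 T z n x.1 x.2⟩
      map_add' := fun x y => Subtype.ext rfl
      map_smul' := fun c x => Subtype.ext rfl }
  refine LinearMap.rank_le_of_injective g ?_
  intro x y hxy
  have h := congrArg Subtype.val hxy
  exact Subtype.ext (Subtype.ext h)

lemma rank_kerS_le (hone : Module.rank ℂ ↥(kerS T z 1) ≤ 1) (n : ℕ) :
    Module.rank ℂ ↥(kerS T z n) ≤ n := by
  induction n with
  | zero =>
    rw [kerS_zero_eq_bot]
    simp [rank_bot]
  | succ n ih =>
    have hrk := LinearMap.rank_range_add_rank_ker (Dres T z n)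
    have hrange : Module.rank ℂ ↥(LinearMap.range (Dres T z n)) ≤
        Module.rank ℂ ↥(kerS T z n) := by
      refine Submodule.rank_mono ?_
      rintro y ⟨x, rfl⟩
      exact Dres_mem T z n x
    have hker := (rank_kerS_one_ker_Dres T z n).trans hone
    calc Module.rank ℂ ↥(kerS T z (n + 1))
        = Module.rank ℂ ↥(LinearMap.range (Dres T z n)) +
          Module.rank ℂ ↥(LinearMap.ker (Dres T z n)) := hrk.symm
      _ ≤ (n : Cardinal) + 1 := add_le_add (hrange.trans ih) hker
      _ = ((n + 1 : ℕ) : Cardinal) := by push_cast; ring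

/-- The orthogonal complement of `Ker (T-z)^n` inside `Ker (T-z)^{n+1}`, as a submodule. -/
def orthS (n : ℕ) : Submodule ℂ Jacobi.ℓ2 where
  carrier := {x : Jacobi.ℓ2 | x ∈ iterKer T z (n + 1) ∧
    ∀ y ∈ iterKer T z n, (inner ℂ y x : ℂ) = 0}
  zero_mem' := ⟨iterKer_zero_mem T z (n + 1), fun y _ => inner_zero_right y⟩
  add_mem' := by
    rintro a b ⟨ha1, ha2⟩ ⟨hb1, hb2⟩
    refine ⟨iterKer_add_mem T z ha1 hb1, fun y hy => ?_⟩
    rw [inner_add_right, ha2 y hy, hb2 y hy, add_zero]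
  smul_mem' := by
    rintro c a ⟨ha1, ha2⟩
    refine ⟨iterKer_smul_mem T z c ha1, fun y hy => ?_⟩
    rw [inner_smul_right, ha2 y hy, mul_zero]

lemma orthS_le (n : ℕ) : orthS T z n ≤ kerS T z (n + 1) := fun _ hx => hx.1

lemma rank_orthS_le (hone : Module.rank ℂ ↥(kerS T z 1) ≤ 1) (n : ℕ) :
    Module.rank ℂ ↥(orthS T z n) ≤ 1 := by
  refine le_trans ?_ hone
  refine LinearMap.rank_le_of_injective
    ((Psi T z n).comp (Submodule.inclusion (orthS_le T z n))) ?_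
  intro x y hxy
  have hsub : Psi T z n (Submodule.inclusion (orthS_le T z n) (x - y)) = 0 := by
    rw [map_sub, map_sub]
    rw [sub_eq_zero]
    exact hxy
  have hmem : ((x - y : orthS T z n) : Jacobi.ℓ2) ∈ iterKer T z n :=
    Psi_zero_mem T z n _ hsub
  have horth := (x - y).2.2 _ hmem
  have : ((x - y : orthS T z n) : Jacobi.ℓ2) = 0 := inner_self_eq_zero.mp horth
  have h0 : x - y = (0 : orthS T z n) := Subtype.ext this
  rwa [sub_eq_zero] at h0
end RankBounds
section Ortho
open Jacobi

variable {lam w : ℤ → ℂ} {z : ℂ}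

lemma eVec_apply (m k : ℤ) : (eVec m : Jacobi.ℓ2) k = if k = m then 1 else 0 := by
  rw [eVec, lp.single_apply]
  split_ifs with h
  · subst h; simp
  · simp [Pi.single_apply, h]

lemma jop_eVec_eq (m : ℤ) :
    Jop lam w ⇑(eVec m : Jacobi.ℓ2) =
      ⇑(w (m - 1) • eVec (m - 1) + lam m • eVec m + w m • eVec (m + 1) : Jacobi.ℓ2) := by
  funext n
  simp only [lp.coeFn_add, lp.coeFn_smul, Pi.add_apply, Pi.smul_apply, smul_eq_mul,
    S10.jop_def, eVec_apply]
  split_ifs <;> first | (exfalso; omega) | (subst_vars; ring) | ring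

lemma eVec_mem_dom (m : ℤ) : eVec m ∈ (Jmax lam w).domain := by
  show Memℓp (Jop lam w ⇑(eVec m : Jacobi.ℓ2)) 2
  rw [jop_eVec_eq]
  exact lp.memℓp _

lemma stdSpan_le_dom : stdSpan ≤ (Jmax lam w).domain := by
  rw [stdSpan]
  rw [Submodule.span_le]
  rintro _ ⟨m, rfl⟩
  exact eVec_mem_dom m

lemma jmax_coe' (x : Jacobi.ℓ2) (hx : x ∈ (Jmax lam w).domain) :
    ⇑(Jmax lam w ⟨x, hx⟩ : Jacobi.ℓ2) = Jop lam w ⇑x := rfl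

lemma jmax_eVec (m : ℤ) :
    (Jmax lam w ⟨eVec m, eVec_mem_dom m⟩ : Jacobi.ℓ2) =
      w (m - 1) • eVec (m - 1) + lam m • eVec m + w m • eVec (m + 1) := by
  apply lp.ext
  rw [jmax_coe']
  exact jop_eVec_eq m

lemma inner_star_eVec {u : ℤ → ℂ} (humem : Memℓp u 2) (k : ℤ) :
    (inner ℂ (star (⟨u, humem⟩ : Jacobi.ℓ2)) (eVec k) : ℂ) = u k := by
  rw [eVec, lp.inner_single_right]
  have : (star (⟨u, humem⟩ : Jacobi.ℓ2)) k = star (u k) := by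
    rw [lp.coeFn_star]; rfl
  rw [this, RCLike.inner_apply, starRingEnd_apply, star_star, one_mul]

lemma ortho_span {u : ℤ → ℂ} (humem : Memℓp u 2)
    (hu : ∀ n, Jop lam w u n = z * u n) :
    ∀ y : Jacobi.ℓ2, y ∈ stdSpan →
      ∃ hd : y ∈ (Jmax lam w).domain,
        (inner ℂ (star (⟨u, humem⟩ : Jacobi.ℓ2)) (Jmax lam w ⟨y, hd⟩ : Jacobi.ℓ2) : ℂ) =
          z * inner ℂ (star (⟨u, humem⟩ : Jacobi.ℓ2)) y := by
  intro y hy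
  refine Submodule.span_induction ?_ ?_ ?_ ?_ hy
  · rintro _ ⟨m, rfl⟩
    refine ⟨eVec_mem_dom m, ?_⟩
    rw [jmax_eVec m]
    simp only [inner_add_right, inner_smul_right, inner_star_eVec humem, smul_eq_mul]
    have h := hu m
    rw [S10.jop_def] at h
    linear_combination h
  · refine ⟨(Jmax lam w).domain.zero_mem, ?_⟩
    have e : (⟨(0 : Jacobi.ℓ2), (Jmax lam w).domain.zero_mem⟩ : (Jmax lam w).domain) = 0 := rfl
    rw [e, (Jmax lam w).map_zero]
    simp
  · rintro a b - - ⟨ha, ha2⟩ ⟨hb, hb2⟩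
    have hab : a + b ∈ (Jmax lam w).domain := (Jmax lam w).domain.add_mem ha hb
    refine ⟨hab, ?_⟩
    have e : (⟨a + b, hab⟩ : (Jmax lam w).domain) = ⟨a, ha⟩ + ⟨b, hb⟩ := rfl
    rw [e, (Jmax lam w).map_add, inner_add_right, ha2, hb2, inner_add_right]
    ring
  · rintro c a - ⟨ha, ha2⟩
    have hca : c • a ∈ (Jmax lam w).domain := (Jmax lam w).domain.smul_mem c ha
    refine ⟨hca, ?_⟩
    have e : (⟨c • a, hca⟩ : (Jmax lam w).domain) = c • ⟨a, ha⟩ := rfl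
    rw [e, (Jmax lam w).map_smul, inner_smul_right, ha2, inner_smul_right]
    ring

lemma ortho_all (hJ : Jmin lam w = Jmax lam w) {u : ℤ → ℂ} (humem : Memℓp u 2)
    (hu : ∀ n, Jop lam w u n = z * u n) (x : (Jmax lam w).domain) :
    (inner ℂ (star (⟨u, humem⟩ : Jacobi.ℓ2)) ((Jmax lam w) x - z • (x : Jacobi.ℓ2)) : ℂ) = 0 := by
  have hfc : Continuous (fun p : Jacobi.ℓ2 × Jacobi.ℓ2 =>
      (inner ℂ (star (⟨u, humem⟩ : Jacobi.ℓ2)) p.2 : ℂ) -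
        z * (inner ℂ (star (⟨u, humem⟩ : Jacobi.ℓ2)) p.1 : ℂ)) := by
    apply Continuous.sub
    · exact Continuous.inner continuous_const continuous_snd
    · exact Continuous.mul continuous_const (Continuous.inner continuous_const continuous_fst)
  have hgraph_sub : ((((Jmax lam w).domRestrict stdSpan).graph : Submodule ℂ _) :
      Set (Jacobi.ℓ2 × Jacobi.ℓ2)) ⊆
      (fun p : Jacobi.ℓ2 × Jacobi.ℓ2 =>
        (inner ℂ (star (⟨u, humem⟩ : Jacobi.ℓ2)) p.2 : ℂ) -
          z * (inner ℂ (star (⟨u, humem⟩ : Jacobi.ℓ2)) p.1 : ℂ)) ⁻¹' {0} := by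
    rintro p hp
    have hp' : p ∈ ((Jmax lam w).domRestrict stdSpan).graph := hp
    rw [LinearPMap.mem_graph_iff] at hp'
    obtain ⟨y, hy1, hy2⟩ := hp'
    have hymem : (y : Jacobi.ℓ2) ∈ stdSpan :=
      ((y.2 : (y : Jacobi.ℓ2) ∈ stdSpan ⊓ (Jmax lam w).domain)).1
    obtain ⟨hd, hval⟩ := ortho_span humem hu (y : Jacobi.ℓ2) hymem
    have hRy : ((Jmax lam w).domRestrict stdSpan) y =
        Jmax lam w ⟨(y : Jacobi.ℓ2), hd⟩ := LinearPMap.domRestrict_apply rfl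
    simp only [Set.mem_preimage, Set.mem_singleton_iff]
    rw [← hy1, ← hy2, hRy, hval]
    ring
  have hclos : (((Jmax lam w).graph : Submodule ℂ _) : Set (Jacobi.ℓ2 × Jacobi.ℓ2)) ⊆
      closure ((((Jmax lam w).domRestrict stdSpan).graph : Submodule ℂ _) :
        Set (Jacobi.ℓ2 × Jacobi.ℓ2)) := by
    conv_lhs => rw [← hJ]
    rw [Jmin]
    by_cases hcl : ((Jmax lam w).domRestrict stdSpan).IsClosable
    · intro q hq
      rw [← hcl.graph_closure_eq_closure_graph] at hq
      exact hq
    · rw [LinearPMap.closure_def' hcl]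
      exact subset_closure
  have hker := hclos.trans (closure_minimal hgraph_sub ((isClosed_singleton).preimage hfc))
  have hx := hker ((Jmax lam w).mem_graph x)
  have hx0 : (inner ℂ (star (⟨u, humem⟩ : Jacobi.ℓ2)) ((Jmax lam w) x) : ℂ) -
      z * (inner ℂ (star (⟨u, humem⟩ : Jacobi.ℓ2)) (x : Jacobi.ℓ2) : ℂ) = 0 := hx
  rw [inner_sub_right, inner_smul_right]
  exact hx0

end Ortho
section Green
open Jacobi

variable {lam w : ℤ → ℂ} {z : ℂ}

lemma memℓp_two_summable {f : ℤ → ℂ} (hf : Memℓp f 2) :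
    Summable fun n => ‖f n‖ ^ (2 : ℕ) := by
  have h := hf.summable (p := 2) (by norm_num)
  have he : ((2 : ENNReal)).toReal = ((2 : ℕ) : ℝ) := by norm_num
  rw [he] at h
  simpa [Real.rpow_natCast] using h

lemma summable_sq_memℓp {f : ℤ → ℂ} (hf : Summable fun n => ‖f n‖ ^ (2 : ℕ)) :
    Memℓp f 2 := by
  apply memℓp_gen
  have he : ((2 : ENNReal)).toReal = ((2 : ℕ) : ℝ) := by norm_num
  rw [he]
  simpa [Real.rpow_natCast] using hf

lemma l2_mul_summable {f g : ℤ → ℂ} (hf : Memℓp f 2) (hg : Memℓp g 2) :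
    Summable fun n => ‖f n * g n‖ := by
  have hf2 := memℓp_two_summable hf
  have hg2 := memℓp_two_summable hg
  refine Summable.of_nonneg_of_le (fun n => norm_nonneg _)
    (fun n => ?_) (((hf2.add hg2).div_const 2))
  rw [norm_mul]
  nlinarith [sq_nonneg (‖f n‖ - ‖g n‖), norm_nonneg (f n), norm_nonneg (g n)]

lemma cut_summable {t : ℤ → ℂ} (ht : Summable fun m => ‖t m‖) (P : ℤ → Prop)
    [DecidablePred P] :
    Summable fun m => if P m then t m else 0 := by
  refine Summable.of_norm_bounded ht fun m => ?_
  split_ifs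
  · exact le_rfl
  · simp

lemma cut_norm_summable {t : ℤ → ℂ} (ht : Summable fun m => ‖t m‖) (P : ℤ → Prop)
    [DecidablePred P] :
    Summable fun m => ‖if P m then t m else 0‖ := by
  refine Summable.of_nonneg_of_le (fun m => norm_nonneg _) (fun m => ?_) ht
  split_ifs
  · exact le_rfl
  · simp

lemma cut_norm_le {t : ℤ → ℂ} (ht : Summable fun m => ‖t m‖) (P : ℤ → Prop)
    [DecidablePred P] :
    ‖∑' m, if P m then t m else 0‖ ≤ ∑' m, ‖t m‖ := by
  refine (norm_tsum_le_tsum_norm (cut_norm_summable ht P)).trans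
    (Summable.tsum_le_tsum (fun m => ?_) (cut_norm_summable ht P) ht)
  split_ifs
  · exact le_rfl
  · simp

lemma green (hw : ∀ n, w n ≠ 0) {u v : ℤ → ℂ} (humem : Memℓp u 2) (hvmem : Memℓp v 2)
    (hu : ∀ n, Jop lam w u n = z * u n) (hv : ∀ n, Jop lam w v n = z * v n)
    (hWne : S10.Wr w u v 0 ≠ 0) (y : ℤ → ℂ) (hymem : Memℓp y 2) :
    ∃ x : ℤ → ℂ, Memℓp x 2 ∧ ∀ n, Jop lam w x n = z * x n + y n := by
  set W := S10.Wr w u v 0 with hWdef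
  have hWn : ∀ n, w n * (u n * v (n + 1) - u (n + 1) * v n) = W := by
    intro n
    have := S10.wr_const hu hv n
    rw [S10.Wr] at this
    exact this
  have ht : Summable fun m => ‖u m * y m‖ := l2_mul_summable humem hymem
  have hs : Summable fun m => ‖v m * y m‖ := l2_mul_summable hvmem hymem
  set A := ∑' m, ‖u m * y m‖ with hA
  set B := ∑' m, ‖v m * y m‖ with hB
  set a : ℤ → ℂ := fun n => ∑' m, if m ≤ n then u m * y m else 0 with ha
  set b : ℤ → ℂ := fun n => ∑' m, if n < m then v m * y m else 0 with hb
  have hrec_a : ∀ n : ℤ, a n = a (n - 1) + u n * y n := by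
    intro n
    have h1 : Summable fun m => if m ≤ n then u m * y m else 0 :=
      cut_summable ht _
    have h2 : Summable fun m => if m ≤ n - 1 then u m * y m else 0 :=
      cut_summable ht _
    have key : a n - a (n - 1) = u n * y n := by
      rw [ha]
      simp only
      rw [← Summable.tsum_sub h1 h2]
      have hdiff : (fun m => (if m ≤ n then u m * y m else 0) -
          (if m ≤ n - 1 then u m * y m else 0)) = fun m => if m = n then u m * y m else 0 := by
        funext m
        split_ifs <;> first | ring1 | (exfalso; omega)
      rw [hdiff]
      rw [tsum_eq_single n (fun m hm => if_neg hm)]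
      rw [if_pos rfl]
    linear_combination key
  have hrec_b : ∀ n : ℤ, b (n - 1) = b n + v n * y n := by
    intro n
    have h1 : Summable fun m => if n - 1 < m then v m * y m else 0 :=
      cut_summable hs _
    have h2 : Summable fun m => if n < m then v m * y m else 0 :=
      cut_summable hs _
    have key : b (n - 1) - b n = v n * y n := by
      rw [hb]
      simp only
      rw [← Summable.tsum_sub h1 h2]
      have hdiff : (fun m => (if n - 1 < m then v m * y m else 0) -
          (if n < m then v m * y m else 0)) = fun m => if m = n then v m * y m else 0 := by
        funext m
        split_ifs <;> first | ring1 | (exfalso; omega)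
      rw [hdiff]
      rw [tsum_eq_single n (fun m hm => if_neg hm)]
      rw [if_pos rfl]
    linear_combination key
  have hAbd : ∀ n, ‖a n‖ ≤ A := fun n => cut_norm_le ht _
  have hBbd : ∀ n, ‖b n‖ ≤ B := fun n => cut_norm_le hs _
  refine ⟨fun n => W⁻¹ * (v n * a n + u n * b n), ?_, ?_⟩
  · -- membership in ℓ²
    apply summable_sq_memℓp
    have hu2 := memℓp_two_summable humem
    have hv2 := memℓp_two_summable hvmem
    have hmaj : Summable fun n =>
        2 * (‖W⁻¹‖ * A) ^ 2 * ‖v n‖ ^ 2 + 2 * (‖W⁻¹‖ * B) ^ 2 * ‖u n‖ ^ 2 :=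
      (hv2.mul_left _).add (hu2.mul_left _)
    refine Summable.of_nonneg_of_le (fun n => by positivity) (fun n => ?_) hmaj
    have hbd : ‖W⁻¹ * (v n * a n + u n * b n)‖ ≤ ‖W⁻¹‖ * (‖v n‖ * A + ‖u n‖ * B) := by
      rw [norm_mul]
      have h1 : ‖v n * a n + u n * b n‖ ≤ ‖v n‖ * A + ‖u n‖ * B := by
        refine (norm_add_le _ _).trans ?_
        rw [norm_mul, norm_mul]
        have := hAbd n
        have := hBbd n
        gcongr
      gcongr
    have h0 : (0:ℝ) ≤ ‖W⁻¹ * (v n * a n + u n * b n)‖ := norm_nonneg _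
    have hA0 : (0:ℝ) ≤ A := tsum_nonneg fun m => norm_nonneg _
    have hB0 : (0:ℝ) ≤ B := tsum_nonneg fun m => norm_nonneg _
    nlinarith [sq_nonneg (‖W⁻¹‖ * A * ‖v n‖ - ‖W⁻¹‖ * B * ‖u n‖), norm_nonneg (v n),
      norm_nonneg (u n), norm_nonneg W⁻¹, mul_nonneg (norm_nonneg (W⁻¹)) hA0,
      mul_nonneg (norm_nonneg (W⁻¹)) hB0]
  · -- the equation
    intro n
    have hu' := hu n
    have hv' := hv n
    rw [S10.jop_def] at hu' hv'
    have hWn' := hWn (n - 1)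
    rw [show n - 1 + 1 = n by ring] at hWn'
    have ha1 : a (n - 1) = a n - u n * y n := by linear_combination -(hrec_a n)
    have ha2 : a (n + 1) = a n + u (n + 1) * y (n + 1) := by
      have h := hrec_a (n + 1)
      rw [show n + 1 - 1 = n by ring] at h
      linear_combination h
    have hb1 : b (n - 1) = b n + v n * y n := hrec_b n
    have hb2 : b (n + 1) = b n - v (n + 1) * y (n + 1) := by
      have h := hrec_b (n + 1)
      rw [show n + 1 - 1 = n by ring] at h
      linear_combination -h
    rw [S10.jop_def]
    beta_reduce
    rw [ha1, ha2, hb1, hb2]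
    have hWi : W * W⁻¹ = 1 := mul_inv_cancel₀ hWne
    linear_combination (W⁻¹ * a n) * hv' + (W⁻¹ * b n) * hu' + (W⁻¹ * y n) * hWn' + (y n) * hWi

end Green
section KerOne
open Jacobi

variable {lam w : ℤ → ℂ} {z : ℂ}

lemma mem_ker1_iff {x : Jacobi.ℓ2} :
    x ∈ iterKer (Jmax lam w) z 1 ↔
      ∃ _ : x ∈ (Jmax lam w).domain, ∀ n, Jop lam w (⇑x) n = z * x n := by
  constructor
  · rintro ⟨hx, h0⟩
    refine ⟨hx, fun n => ?_⟩
    have h0' : (Jmax lam w ⟨x, hx⟩ : Jacobi.ℓ2) - z • x = 0 := h0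
    have := congrFun (congrArg (fun (f : Jacobi.ℓ2) => ⇑f) h0') n
    simp only [lp.coeFn_sub, lp.coeFn_smul, lp.coeFn_zero, Pi.sub_apply, Pi.smul_apply,
      Pi.zero_apply, jmax_coe', smul_eq_mul] at this
    linear_combination this
  · rintro ⟨hx, hsol⟩
    refine ⟨hx, ?_⟩
    have : (Jmax lam w ⟨x, hx⟩ : Jacobi.ℓ2) - z • x = 0 := by
      apply lp.ext
      funext n
      simp only [lp.coeFn_sub, lp.coeFn_smul, lp.coeFn_zero, Pi.sub_apply, Pi.smul_apply,
        Pi.zero_apply, jmax_coe', smul_eq_mul]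
      rw [hsol n]
      ring
    exact this ▸ rfl

/-- The key analytic fact: two ℓ² solutions have vanishing Wronskian. -/
lemma wr_eq_zero (hw : ∀ n, w n ≠ 0) (hJ : Jmin lam w = Jmax lam w)
    {u v : ℤ → ℂ} (humem : Memℓp u 2) (hvmem : Memℓp v 2)
    (hu : ∀ n, Jop lam w u n = z * u n) (hv : ∀ n, Jop lam w v n = z * v n) :
    S10.Wr w u v 0 = 0 := by
  by_contra hWne
  obtain ⟨x, hx2, hxsol⟩ := green hw humem hvmem hu hv hWne (star u) humem.star_mem
  have hxdom : (⟨x, hx2⟩ : Jacobi.ℓ2) ∈ (Jmax lam w).domain := by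
    show Memℓp (Jop lam w x) 2
    have he : Jop lam w x = z • x + star u := by
      funext n
      rw [hxsol n]
      rfl
    rw [he]
    exact (hx2.const_smul z).add humem.star_mem
  have key : (Jmax lam w) ⟨⟨x, hx2⟩, hxdom⟩ - z • ((⟨x, hx2⟩ : Jacobi.ℓ2)) =
      star (⟨u, humem⟩ : Jacobi.ℓ2) := by
    apply lp.ext
    funext n
    rw [lp.coeFn_sub, lp.coeFn_star]
    simp only [Pi.sub_apply, Pi.star_apply]
    rw [jmax_coe']
    rw [lp.coeFn_smul]
    simp only [Pi.smul_apply, smul_eq_mul]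
    show Jop lam w x n - z * x n = star (u n)
    rw [hxsol n]
    have hst : star u n = star (u n) := rfl
    rw [← hst]
    ring
  have horth := ortho_all (z := z) hJ humem hu ⟨⟨x, hx2⟩, hxdom⟩
  rw [key] at horth
  have hzero : star (⟨u, humem⟩ : Jacobi.ℓ2) = 0 := inner_self_eq_zero.mp horth
  have hu0 : ∀ n, u n = 0 := by
    intro n
    have hc := congrFun (congrArg (fun f : Jacobi.ℓ2 => ⇑f) hzero) n
    simp only [lp.coeFn_star, Pi.star_apply, lp.coeFn_zero, Pi.zero_apply] at hc
    exact star_eq_zero.mp hc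
  apply hWne
  rw [S10.Wr, hu0 0, hu0 (0 + 1)]
  ring

set_option synthInstance.maxHeartbeats 1000000 in
lemma rank_ker1_le_one (hw : ∀ n, w n ≠ 0) (hJ : Jmin lam w = Jmax lam w) :
    Module.rank ℂ ↥(kerS (Jmax lam w) z 1) ≤ 1 := by
  rw [rank_le_one_iff]
  by_cases hbot : ∀ x : ↥(kerS (Jmax lam w) z 1), x = (0 : ↥(kerS (Jmax lam w) z 1))
  · exact ⟨0, fun v => ⟨0, by rw [smul_zero, hbot v]⟩⟩
  · push_neg at hbot
    obtain ⟨u0, hu0⟩ := hbot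
    refine ⟨u0, fun v0 => ?_⟩
    obtain ⟨hud, husol⟩ := mem_ker1_iff.mp u0.2
    obtain ⟨hvd, hvsol⟩ := mem_ker1_iff.mp v0.2
    have humem : Memℓp (⇑(u0 : Jacobi.ℓ2)) 2 := lp.memℓp _
    have hvmem : Memℓp (⇑(v0 : Jacobi.ℓ2)) 2 := lp.memℓp _
    have hW := wr_eq_zero (z := z) hw hJ humem hvmem husol hvsol
    have hm : ∃ m : ℤ, (u0 : Jacobi.ℓ2) m ≠ 0 := by
      by_contra hcon
      push_neg at hcon
      apply hu0
      apply Subtype.ext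
      apply lp.ext
      funext n
      simpa using hcon n
    obtain ⟨m, hm⟩ := hm
    have hdep := S10.sol_dependent hw husol hvsol hW hm
    refine ⟨(v0 : Jacobi.ℓ2) m / (u0 : Jacobi.ℓ2) m, ?_⟩
    apply Subtype.ext
    show ((v0 : Jacobi.ℓ2) m / (u0 : Jacobi.ℓ2) m) • (u0 : Jacobi.ℓ2) = (v0 : Jacobi.ℓ2)
    apply lp.ext
    funext n
    rw [lp.coeFn_smul]
    simp only [Pi.smul_apply, smul_eq_mul]
    exact (hdep n).symm

end KerOne
/-- if `J_min = J_max =: J` and `ρ(J) ≠ ∅`, then the orthogonal complement of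
`Ker (J−z)^n` inside `Ker (J−z)^{n+1}` has dimension at most `1`; in particular
`dim Ker (J−z)^n ≤ n`. -/
theorem statement10 (lam w : ℤ → ℂ) (hw : ∀ n, w n ≠ 0)
    (hJ : Jacobi.Jmin lam w = Jacobi.Jmax lam w)
    (hres : ∃ z : ℂ, Jacobi.InRes (Jacobi.Jmax lam w) z) (z : ℂ) :
    (∀ n : ℕ, Module.rank ℂ ↥(Submodule.span ℂ
        {x : Jacobi.ℓ2 | x ∈ Jacobi.iterKer (Jacobi.Jmax lam w) z (n + 1) ∧
          ∀ y ∈ Jacobi.iterKer (Jacobi.Jmax lam w) z n, (inner ℂ y x : ℂ) = 0}) ≤ 1) ∧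
    ∀ n : ℕ,
      Module.rank ℂ ↥(Submodule.span ℂ (Jacobi.iterKer (Jacobi.Jmax lam w) z n)) ≤ n := by
  have hone : Module.rank ℂ ↥(kerS (Jacobi.Jmax lam w) z 1) ≤ 1 := rank_ker1_le_one hw hJ
  constructor
  · intro n
    have hset : {x : Jacobi.ℓ2 | x ∈ Jacobi.iterKer (Jacobi.Jmax lam w) z (n + 1) ∧
          ∀ y ∈ Jacobi.iterKer (Jacobi.Jmax lam w) z n, (inner ℂ y x : ℂ) = 0}
        = ↑(orthS (Jacobi.Jmax lam w) z n) := rfl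
    rw [hset, Submodule.span_eq]
    exact rank_orthS_le _ _ hone n
  · intro n
    have hset : Jacobi.iterKer (Jacobi.Jmax lam w) z n = ↑(kerS (Jacobi.Jmax lam w) z n) := rfl
    rw [hset, Submodule.span_eq]
    exact rank_kerS_le _ _ hone n

end
end

section
/- Let {f^{(m)}}_{m∈ℕ₀} be complex sequences (ℤ → ℂ) with 𝒥 f^{(0)} = 0, 𝒥 f^{(m)} = m f^{(m−1)} for all m ≥ 1, and f^{(0)} ≠ 0. Then {f^{(m)}}_{m∈ℕ₀} is linearly independent. Moreover, if {g^{(m)}}_{m∈ℕ₀} is another family satisfying the same equations (with g^{(0)} ≠ 0), and if for some k ∈ ℕ₀ one has C^{(ℓ)}_n(f,g) = 0 for all n ∈ ℤ and all ℓ ∈ {0,…,k}, then g^{(k)} ∈ span{f^{(0)},…,f^{(k)}}. -/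
open Filter Topology
open scoped Classical

noncomputable section

private def Jl (lam w : ℤ → ℂ) : (ℤ → ℂ) →ₗ[ℂ] (ℤ → ℂ) where
  toFun := Jacobi.Jop lam w
  map_add' := Jacobi.Jop_add lam w
  map_smul' := Jacobi.Jop_smul lam w

private lemma choose_trinomial (n a b : ℕ) (h : a + b ≤ n) :
    n.choose a * (n - a).choose b = n.choose b * (n - b).choose a := by
  have key : ∀ x y : ℕ, x + y ≤ n →
      n.choose x * (n - x).choose y *
        (x.factorial * y.factorial * (n - x - y).factorial) = n.factorial := by
    intro x y hxy
    have hx : x ≤ n := by omega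
    have hy : y ≤ n - x := by omega
    have e1 := Nat.choose_mul_factorial_mul_factorial hx
    have e2 := Nat.choose_mul_factorial_mul_factorial hy
    calc n.choose x * (n - x).choose y *
          (x.factorial * y.factorial * (n - x - y).factorial)
        = ((n - x).choose y * y.factorial * (n - x - y).factorial) *
            (n.choose x * x.factorial) := by ring
      _ = (n - x).factorial * (n.choose x * x.factorial) := by rw [e2]
      _ = n.choose x * x.factorial * (n - x).factorial := by ring
      _ = n.factorial := e1
  have k1 := key a b h
  have k2 := key b a (by omega)
  have hsub : n - b - a = n - a - b := by omega
  rw [hsub] at k2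
  have k2' : n.choose b * (n - b).choose a *
      (a.factorial * b.factorial * (n - a - b).factorial) = n.factorial := by
    rw [show a.factorial * b.factorial = b.factorial * a.factorial from mul_comm _ _]
    exact k2
  have hpos : 0 < a.factorial * b.factorial * (n - a - b).factorial := by positivity
  exact Nat.eq_of_mul_eq_mul_right hpos (k1.trans k2'.symm)

private lemma jop_ext (lam w : ℤ → ℂ) (hw : ∀ n, w n ≠ 0) (u : ℤ → ℂ)
    (hu : Jacobi.Jop lam w u = 0) (N : ℤ) (h1 : u N = 0) (h2 : u (N + 1) = 0) :
    u = 0 := by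
  have heq : ∀ n : ℤ, w (n - 1) * u (n - 1) + lam n * u n + w n * u (n + 1) = 0 :=
    fun n => congrFun hu n
  have up : ∀ n : ℤ, N ≤ n → u n = 0 ∧ u (n + 1) = 0 := by
    refine Int.le_induction ⟨h1, h2⟩ ?_
    intro n hn ih
    refine ⟨ih.2, ?_⟩
    have he := heq (n + 1)
    rw [show n + 1 - 1 = n by ring, ih.1, ih.2] at he
    have : w (n + 1) * u (n + 1 + 1) = 0 := by linear_combination he
    rcases mul_eq_zero.mp this with h | h
    · exact absurd h (hw _)
    · exact h
  have down : ∀ n : ℤ, n ≤ N → u n = 0 ∧ u (n + 1) = 0 := by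
    refine Int.le_induction_down ⟨h1, h2⟩ ?_
    intro n hn ih
    have he := heq n
    rw [ih.1, ih.2] at he
    have : w (n - 1) * u (n - 1) = 0 := by linear_combination he
    have hz : u (n - 1) = 0 := by
      rcases mul_eq_zero.mp this with h | h
      · exact absurd h (hw _)
      · exact h
    refine ⟨hz, ?_⟩
    rw [show n - 1 + 1 = n by ring]
    exact ih.1
  funext n
  rcases le_or_gt N n with h | h
  · exact (up n h).1
  · exact (down n h.le).1

private lemma prop_of_wronskian (lam w : ℤ → ℂ) (hw : ∀ n, w n ≠ 0) (u v : ℤ → ℂ)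
    (hu : Jacobi.Jop lam w u = 0) (hv : Jacobi.Jop lam w v = 0) (hu0 : u ≠ 0)
    (hC : ∀ n : ℤ, u n * v (n + 1) - u (n + 1) * v n = 0) : ∃ c : ℂ, v = c • u := by
  have hex : ∃ N : ℤ, u N ≠ 0 := by
    by_contra hcon
    push_neg at hcon
    exact hu0 (funext fun n => hcon n)
  obtain ⟨N, hN⟩ := hex
  set c : ℂ := v N / u N with hc
  have hJ : Jacobi.Jop lam w (v - c • u) = 0 := by
    have : Jl lam w (v - c • u) = Jl lam w v - c • Jl lam w u := by
      rw [map_sub, map_smul]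
    show Jl lam w (v - c • u) = 0
    rw [this, show Jl lam w v = 0 from hv, show Jl lam w u = 0 from hu]
    simp
  have h1 : (v - c • u) N = 0 := by
    simp only [Pi.sub_apply, Pi.smul_apply, smul_eq_mul, hc]
    field_simp
    ring
  have h2 : (v - c • u) (N + 1) = 0 := by
    simp only [Pi.sub_apply, Pi.smul_apply, smul_eq_mul, hc]
    have := hC N
    field_simp
    linear_combination this
  have := jop_ext lam w hw _ hJ N h1 h2
  exact ⟨c, sub_eq_zero.mp this⟩


private lemma lin_indep_aux (lam w : ℤ → ℂ) (f : ℕ → ℤ → ℂ)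
    (hf0 : Jacobi.Jop lam w (f 0) = 0) (hf0' : f 0 ≠ 0)
    (hf : ∀ m : ℕ, Jacobi.Jop lam w (f (m + 1)) = ((m : ℂ) + 1) • f m) :
    ∀ (m : ℕ) (c : ℕ → ℂ), (∑ i ∈ Finset.range m, c i • f i) = 0 → ∀ i < m, c i = 0 := by
  intro m
  induction m with
  | zero => intro c _ i hi; omega
  | succ m ih =>
    intro c hc i hi
    have h1 : (Jl lam w) (∑ i ∈ Finset.range (m + 1), c i • f i) = 0 := by
      rw [hc]; exact map_zero _
    rw [map_sum] at h1
    simp only [map_smul] at h1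
    rw [Finset.sum_range_succ'] at h1
    rw [show Jl lam w (f 0) = 0 from hf0] at h1
    have h1' : ∑ i ∈ Finset.range m, (c (i + 1) * ((i : ℂ) + 1)) • f i = 0 := by
      rw [← h1]
      rw [smul_zero, add_zero]
      refine Finset.sum_congr rfl fun i _ => ?_
      rw [show Jl lam w (f (i + 1)) = ((i : ℂ) + 1) • f i from hf i, smul_smul]
    have h2 := ih (fun i => c (i + 1) * ((i : ℂ) + 1)) h1'
    have hcs : ∀ j < m, c (j + 1) = 0 := by
      intro j hj
      have := h2 j hj
      have hne : ((j : ℂ) + 1) ≠ 0 := Nat.cast_add_one_ne_zero j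
      rcases mul_eq_zero.mp this with h | h
      · exact h
      · exact absurd h hne
    have h3 : ∑ i ∈ Finset.range (m + 1), c i • f i = c 0 • f 0 := by
      rw [Finset.sum_range_succ']
      have hz : ∀ i ∈ Finset.range m, c (i + 1) • f (i + 1) = 0 := by
        intro i hiM
        rw [hcs i (Finset.mem_range.mp hiM), zero_smul]
      rw [Finset.sum_congr rfl hz, Finset.sum_const, smul_zero, zero_add]
    rw [h3] at hc
    have hc0 : c 0 = 0 := by
      rcases smul_eq_zero.mp hc with h | h
      · exact h
      · exact absurd h hf0'
    rcases Nat.eq_zero_or_eq_succ_pred i with h | h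
    · rw [h]; exact hc0
    · rw [h]; exact hcs _ (by omega)

private lemma lin_indep (lam w : ℤ → ℂ) (f : ℕ → ℤ → ℂ)
    (hf0 : Jacobi.Jop lam w (f 0) = 0) (hf0' : f 0 ≠ 0)
    (hf : ∀ m : ℕ, Jacobi.Jop lam w (f (m + 1)) = ((m : ℂ) + 1) • f m) :
    LinearIndependent ℂ f := by
  rw [linearIndependent_iff']
  intro s c hsum i hi
  set m := s.sup id + 1 with hm
  have hsub : s ⊆ Finset.range m :=
    fun j hj => Finset.mem_range.mpr (Nat.lt_succ_of_le (Finset.le_sup (f := id) hj))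
  have hext : ∑ j ∈ Finset.range m, (if j ∈ s then c j else 0) • f j = 0 := by
    rw [← Finset.sum_subset hsub (fun j _ hj => by rw [if_neg hj, zero_smul])]
    rw [← hsum]
    exact Finset.sum_congr rfl fun j hj => by rw [if_pos hj]
  have := lin_indep_aux lam w f hf0 hf0' hf m _ hext i (Finset.mem_range.mp (hsub hi))
  rwa [if_pos hi] at this

private lemma key_ind (lam w : ℤ → ℂ) (hw : ∀ n, w n ≠ 0)
    (f g : ℕ → ℤ → ℂ)
    (hf0 : Jacobi.Jop lam w (f 0) = 0) (hf0' : f 0 ≠ 0)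
    (hf : ∀ m : ℕ, Jacobi.Jop lam w (f (m + 1)) = ((m : ℂ) + 1) • f m)
    (hg0 : Jacobi.Jop lam w (g 0) = 0)
    (hg : ∀ m : ℕ, Jacobi.Jop lam w (g (m + 1)) = ((m : ℂ) + 1) • g m) :
    ∀ k : ℕ,
      (∀ ℓ ≤ k, ∀ n : ℤ,
        (∑ j ∈ Finset.range (ℓ + 1), (ℓ.choose j : ℂ) *
          (f j n * g (ℓ - j) (n + 1) - f j (n + 1) * g (ℓ - j) n)) = 0) →
      ∃ b : ℕ → ℂ, ∀ ℓ ≤ k, ∀ n : ℤ,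
        g ℓ n = ∑ i ∈ Finset.range (ℓ + 1), (ℓ.choose i : ℂ) * b (ℓ - i) * f i n := by
  intro k
  induction k with
  | zero =>
    intro hC
    have hC0 : ∀ n : ℤ, f 0 n * g 0 (n + 1) - f 0 (n + 1) * g 0 n = 0 := by
      intro n
      have := hC 0 le_rfl n
      simpa using this
    obtain ⟨c, hcv⟩ := prop_of_wronskian lam w hw (f 0) (g 0) hf0 hg0 hf0' hC0
    refine ⟨fun _ => c, ?_⟩
    intro ℓ hℓ n
    interval_cases ℓ
    simp [hcv]
  | succ k ih =>
    intro hC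
    obtain ⟨b, hb⟩ := ih fun ℓ hℓ => hC ℓ (le_trans hℓ (Nat.le_succ k))
    set c : ℕ → ℂ := fun i => ((k + 1).choose (i + 1) : ℂ) * b (k - i) with hcdef
    set F : ℤ → ℂ := ∑ i ∈ Finset.range (k + 1), c i • f (i + 1) with hFdef
    set h : ℤ → ℂ := g (k + 1) - F with hhdef
    have hFeval : ∀ m : ℤ, F m = ∑ i ∈ Finset.range (k + 1), c i * f (i + 1) m := by
      intro m
      rw [hFdef, Finset.sum_apply]
      exact Finset.sum_congr rfl fun i _ => rfl
    have hhe : ∀ m : ℤ, h m = g (k + 1) m - ∑ i ∈ Finset.range (k + 1), c i * f (i + 1) m := by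
      intro m; rw [hhdef]; simp [hFeval m]
    have hgk : g k = ∑ i ∈ Finset.range (k + 1), (((k.choose i : ℂ)) * b (k - i)) • f i := by
      funext n
      rw [hb k le_rfl n, Finset.sum_apply]
      refine Finset.sum_congr rfl fun i _ => ?_
      simp [Pi.smul_apply, smul_eq_mul, mul_assoc]
    have hJh : Jacobi.Jop lam w h = 0 := by
      show Jl lam w h = 0
      rw [hhdef, map_sub, hFdef, map_sum]
      rw [show Jl lam w (g (k + 1)) = ((k : ℂ) + 1) • g k from hg k, hgk]
      simp only [map_smul]
      rw [Finset.smul_sum, ← Finset.sum_sub_distrib]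
      refine Finset.sum_eq_zero fun i hi => ?_
      rw [sub_eq_zero, show Jl lam w (f (i + 1)) = ((i : ℂ) + 1) • f i from hf i,
        smul_smul, smul_smul]
      congr 1
      have hnat : (k + 1) * k.choose i = (k + 1).choose (i + 1) * (i + 1) :=
        Nat.add_one_mul_choose_eq k i
      have hcast : ((k : ℂ) + 1) * (k.choose i : ℂ) =
          ((k + 1).choose (i + 1) : ℂ) * ((i : ℂ) + 1) := by
        exact_mod_cast congrArg (fun x : ℕ => (x : ℂ)) hnat
      simp only [hcdef]
      linear_combination b (k - i) * hcast
    -- the Wronskian of f 0 and h vanishes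
    have hCh : ∀ n : ℤ, f 0 n * h (n + 1) - f 0 (n + 1) * h n = 0 := by
      intro n
      set Cq : ℕ → ℕ → ℂ := fun p q => f p n * f q (n + 1) - f p (n + 1) * f q n with hCqdef
      have hH := hC (k + 1) le_rfl n
      rw [Finset.sum_range_succ'] at hH
      have hG : ∀ j ∈ Finset.range (k + 1),
          ((k + 1).choose (j + 1) : ℂ) *
            (f (j + 1) n * g (k + 1 - (j + 1)) (n + 1) - f (j + 1) (n + 1) * g (k + 1 - (j + 1)) n)
          = ∑ i ∈ Finset.range (k - j + 1),
              ((k + 1).choose (j + 1) : ℂ) * (((k - j).choose i : ℂ) * b (k - j - i)) * Cq (j + 1) i := by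
        intro j hj
        have hkj : k + 1 - (j + 1) = k - j := by omega
        rw [hkj, hb (k - j) (Nat.sub_le k j) n, hb (k - j) (Nat.sub_le k j) (n + 1)]
        rw [Finset.mul_sum, Finset.mul_sum, ← Finset.sum_sub_distrib, Finset.mul_sum]
        refine Finset.sum_congr rfl fun i _ => ?_
        simp only [hCqdef]
        ring
      rw [Finset.sum_congr rfl hG] at hH
      set A0 : ℂ := ∑ j ∈ Finset.range (k + 1),
          ((k + 1).choose (j + 1) : ℂ) * b (k - j) * Cq (j + 1) 0 with hA0def
      set A1 : ℂ := ∑ j ∈ Finset.range (k + 1), ∑ i ∈ Finset.range (k - j),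
          ((k + 1).choose (j + 1) : ℂ) * (((k - j).choose (i + 1) : ℂ) * b (k - j - (i + 1))) *
            Cq (j + 1) (i + 1) with hA1def
      have hsplit : ∑ j ∈ Finset.range (k + 1), ∑ i ∈ Finset.range (k - j + 1),
          ((k + 1).choose (j + 1) : ℂ) * (((k - j).choose i : ℂ) * b (k - j - i)) * Cq (j + 1) i
          = A1 + A0 := by
        rw [hA1def, hA0def, ← Finset.sum_add_distrib]
        refine Finset.sum_congr rfl fun j _ => ?_
        rw [Finset.sum_range_succ']
        congr 1
        simp
      rw [hsplit] at hH
      have hA1 : A1 = 0 := by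
        have hswap : A1 = ∑ j ∈ Finset.range (k + 1), ∑ i ∈ Finset.range (k - j),
            ((k + 1).choose (i + 1) : ℂ) * (((k - i).choose (j + 1) : ℂ) * b (k - i - (j + 1))) *
              Cq (i + 1) (j + 1) := by
          rw [hA1def]
          rw [Finset.sum_comm' (s' := fun i => Finset.range (k - i)) (t' := Finset.range (k + 1))
            (fun x y => by simp only [Finset.mem_range]; omega)]
        have hneg : A1 = -A1 := by
          conv_lhs => rw [hswap]
          rw [hA1def, ← Finset.sum_neg_distrib]
          refine Finset.sum_congr rfl fun j hj => ?_
          rw [← Finset.sum_neg_distrib]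
          refine Finset.sum_congr rfl fun i hi => ?_
          have hij : j + i < k := by
            have h1 := Finset.mem_range.mp hi
            omega
          have hco : (k + 1).choose (i + 1) * (k - i).choose (j + 1)
              = (k + 1).choose (j + 1) * (k - j).choose (i + 1) := by
            have h1 := choose_trinomial (k + 1) (i + 1) (j + 1) (by omega)
            rw [show k + 1 - (i + 1) = k - i by omega,
              show k + 1 - (j + 1) = k - j by omega] at h1
            exact h1
          have hcoC : ((k + 1).choose (i + 1) : ℂ) * ((k - i).choose (j + 1) : ℂ)
              = ((k + 1).choose (j + 1) : ℂ) * ((k - j).choose (i + 1) : ℂ) := by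
            exact_mod_cast congrArg (fun x : ℕ => (x : ℂ)) hco
          have hbidx : k - i - (j + 1) = k - j - (i + 1) := by omega
          rw [hbidx]
          simp only [hCqdef]
          linear_combination (b (k - j - (i + 1)) * (f (i + 1) n * f (j + 1) (n + 1) -
            f (i + 1) (n + 1) * f (j + 1) n)) * hcoC
        have h2 : A1 + A1 = 0 := by linear_combination hneg
        exact add_self_eq_zero.mp h2
      rw [hhe n, hhe (n + 1)]
      have hB : f 0 n * (∑ i ∈ Finset.range (k + 1), c i * f (i + 1) (n + 1)) -
          f 0 (n + 1) * (∑ i ∈ Finset.range (k + 1), c i * f (i + 1) n) = -A0 := by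
        rw [hA0def, Finset.mul_sum, Finset.mul_sum, ← Finset.sum_sub_distrib,
          ← Finset.sum_neg_distrib]
        refine Finset.sum_congr rfl fun i _ => ?_
        simp only [hcdef, hCqdef]
        ring
      simp only [Nat.choose_zero_right, Nat.cast_one, one_mul, Nat.sub_zero] at hH
      linear_combination hH - hB - hA1
    obtain ⟨c0, hc0⟩ := prop_of_wronskian lam w hw (f 0) h hf0 hJh hf0' hCh
    refine ⟨Function.update b (k + 1) c0, ?_⟩
    intro ℓ hℓ n
    by_cases hℓk : ℓ ≤ k
    · rw [hb ℓ hℓk n]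
      refine Finset.sum_congr rfl fun i _ => ?_
      rw [Function.update_of_ne (by omega : ℓ - i ≠ k + 1)]
    · have hℓeq : ℓ = k + 1 := by omega
      subst hℓeq
      have hhn : h n = c0 * f 0 n := by simpa using congrFun hc0 n
      have hgn : g (k + 1) n = c0 * f 0 n + ∑ i ∈ Finset.range (k + 1), c i * f (i + 1) n := by
        linear_combination hhn - hhe n
      rw [hgn]
      conv_rhs => rw [Finset.sum_range_succ']
      have hterm : ∀ i ∈ Finset.range (k + 1),
          ((k + 1).choose (i + 1) : ℂ) * (Function.update b (k + 1) c0 (k + 1 - (i + 1)))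
            * f (i + 1) n = c i * f (i + 1) n := by
        intro i hi
        rw [show k + 1 - (i + 1) = k - i by omega,
          Function.update_of_ne (by omega : k - i ≠ k + 1)]
      rw [Finset.sum_congr rfl hterm, Nat.sub_zero, Function.update_self]
      simp only [Nat.choose_zero_right, Nat.cast_one, one_mul]
      ring

/-- the purely algebraic lemma on chains `𝒥f⁽⁰⁾ = 0`, `𝒥f⁽ᵐ⁾ = m f⁽ᵐ⁻¹⁾`:
linear independence, and the span implication from vanishing of the `C^{(ℓ)}`'s. -/
theorem statement11 (lam w : ℤ → ℂ) (hw : ∀ n, w n ≠ 0)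
    (f g : ℕ → ℤ → ℂ)
    (hf0 : Jacobi.Jop lam w (f 0) = 0) (hf0' : f 0 ≠ 0)
    (hf : ∀ m : ℕ, Jacobi.Jop lam w (f (m + 1)) = ((m : ℂ) + 1) • f m)
    (hg0 : Jacobi.Jop lam w (g 0) = 0) (hg0' : g 0 ≠ 0)
    (hg : ∀ m : ℕ, Jacobi.Jop lam w (g (m + 1)) = ((m : ℂ) + 1) • g m) :
    LinearIndependent ℂ f ∧
    ∀ k : ℕ,
      (∀ ℓ ≤ k, ∀ n : ℤ,
        (∑ j ∈ Finset.range (ℓ + 1), (ℓ.choose j : ℂ) *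
          (f j n * g (ℓ - j) (n + 1) - f j (n + 1) * g (ℓ - j) n)) = 0) →
      g k ∈ Submodule.span ℂ (f '' Set.Iic k) := by
  constructor
  · exact lin_indep lam w f hf0 hf0' hf
  · intro k hk
    obtain ⟨b, hb⟩ := key_ind lam w hw f g hf0 hf0' hf hg0 hg k hk
    have hgk : g k = ∑ i ∈ Finset.range (k + 1), ((k.choose i : ℂ) * b (k - i)) • f i := by
      funext n
      rw [hb k le_rfl n, Finset.sum_apply]
      refine Finset.sum_congr rfl fun i _ => ?_
      simp [mul_assoc]
    rw [hgk]
    refine Submodule.sum_mem _ fun i hi => Submodule.smul_mem _ _ (Submodule.subset_span ?_)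
    exact ⟨i, Set.mem_Iic.mpr (Nat.lt_succ_iff.mp (Finset.mem_range.mp hi)), rfl⟩

end
end
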